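/- arXiv:1805.05996 — 3 statements merged into one kernel-verified Lean document; each statement's English description precedes it below -/
import Mathlib

section
/- If G is a Δ-critical simple graph, then for any edge xy ∈ E(G), the vertex y is adjacent to at least Δ − d(x) + 1 vertices z of degree Δ with z ≠ x. -/
open Finset

variable {V : Type*}

def IsEdgeColoring (G : SimpleGraph V) (k : ℕ) (φ : V → V → ℕ) : Prop :=
  (∀ u v, φ u v = φ v u) ∧
  (∀ ⦃u v⦄, G.Adj u v → φ u v ∈ Finset.Icc 1 k) ∧
  (∀ ⦃v a b⦄, G.Adj v a → G.Adj v b → a ≠ b → φ v a ≠ φ v b)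

noncomputable def chromIndex (G : SimpleGraph V) : ℕ :=
  sInf {k | ∃ φ : V → V → ℕ, IsEdgeColoring G k φ}

def IsDeltaCritical [Fintype V] (G : SimpleGraph V) [DecidableRel G.Adj] : Prop :=
  G.Connected ∧ chromIndex G = G.maxDegree + 1 ∧
    ∀ e ∈ G.edgeSet, chromIndex (G.deleteEdges {e}) = G.maxDegree

noncomputable def indepNum [Fintype V] (G : SimpleGraph V) : ℕ :=
  sSup {n | ∃ s : Finset V, (∀ u ∈ s, ∀ v ∈ s, u ≠ v → ¬ G.Adj u v) ∧ s.card = n}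

set_option linter.unusedSectionVars false

namespace VALaux

open SimpleGraph

/-- swap two colors -/
def sw (δ γ c : ℕ) : ℕ := if c = δ then γ else if c = γ then δ else c

variable [Fintype V] [DecidableEq V] (G : SimpleGraph V) [DecidableRel G.Adj] (k : ℕ)

/-- color `c` is free (missing) at `v` -/
def freeC (φ : V → V → ℕ) (v : V) (c : ℕ) : Prop :=
  c ∈ Finset.Icc 1 k ∧ ∀ u, G.Adj v u → φ v u ≠ c

/-- `φ` is a proper partial k-edge-coloring of `G` whose unique hole is the edge `ab`
(encoded by color 0 on `ab`). -/
def PartPC (a b : V) (φ : V → V → ℕ) : Prop :=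
  (∀ u v, φ u v = φ v u) ∧ φ a b = 0 ∧
  (∀ u v, G.Adj u v → s(u,v) ≠ s(a,b) → φ u v ∈ Finset.Icc 1 k) ∧
  (∀ v p q, G.Adj v p → G.Adj v q → p ≠ q → φ v p ≠ 0 → φ v p ≠ φ v q)

/-- fan chain around center `a`, starting at the hole partner `b`:
consecutive link: the color of the next edge is free at the current vertex. -/
def Ch (a b : V) (φ : V → V → ℕ) (L : List V) : Prop :=
  L.head? = some b ∧ L.Nodup ∧ (∀ z ∈ L, G.Adj a z) ∧
    L.IsChain (fun p q => freeC G k φ p (φ a q))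

/-- the two-colored subgraph used for Kempe chains -/
def KG (G : SimpleGraph V) (φ : V → V → ℕ) (δ γ : ℕ) : SimpleGraph V where
  Adj u v := G.Adj u v ∧ (φ u v = δ ∨ φ v u = δ ∨ φ u v = γ ∨ φ v u = γ)
  symm := ⟨fun u v ⟨h1, h2⟩ => ⟨h1.symm, by tauto⟩⟩
  loopless := ⟨fun v ⟨h1, _⟩ => G.loopless.irrefl v h1⟩

variable {G k}

theorem icc_ne_zero {c : ℕ} (h : c ∈ Finset.Icc 1 k) : c ≠ 0 := by
  simp only [Finset.mem_Icc] at h; omega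

theorem sym2_congr {v p q : V} (hvp : G.Adj v p) (h : s(v,p) = s(v,q)) : p = q := by
  rcases Sym2.eq_iff.1 h with ⟨_, h2⟩ | ⟨h1, h2⟩
  · exact h2
  · exact absurd (h2 ▸ hvp) (G.loopless.irrefl _)


theorem free_congr {φ φ' : V → V → ℕ} {v : V}
    (h : ∀ u, G.Adj v u → φ' v u = φ v u) (c : ℕ) :
    freeC G k φ' v c ↔ freeC G k φ v c := by
  unfold freeC
  constructor <;> rintro ⟨h1, h2⟩ <;> refine ⟨h1, fun u hu => ?_⟩
  · rw [← h u hu]; exact h2 u hu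
  · rw [h u hu]; exact h2 u hu

/-- extending a partial coloring with a common free color gives a full coloring -/
theorem ext_contra (hnc : ¬ ∃ ψ, IsEdgeColoring G k ψ) {a b : V} {φ : V → V → ℕ} {c : ℕ}
    (hab : G.Adj a b) (h : PartPC G k a b φ)
    (ha : freeC G k φ a c) (hb : freeC G k φ b c) : False := by
  apply hnc
  refine ⟨fun u v => if s(u,v) = s(a,b) then c else φ u v, ?_, ?_, ?_⟩
  · intro u v
    show (if s(u,v) = s(a,b) then c else φ u v) = (if s(v,u) = s(a,b) then c else φ v u)
    rw [Sym2.eq_swap (a := v) (b := u), h.1 u v]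
  · intro u v huv
    show (if s(u,v) = s(a,b) then c else φ u v) ∈ Finset.Icc 1 k
    by_cases h1 : s(u,v) = s(a,b)
    · rw [if_pos h1]; exact ha.1
    · rw [if_neg h1]; exact h.2.2.1 u v huv h1
  · intro v p q hvp hvq hpq
    show (if s(v,p) = s(a,b) then c else φ v p) ≠ (if s(v,q) = s(a,b) then c else φ v q)
    by_cases h1 : s(v,p) = s(a,b) <;> by_cases h2 : s(v,q) = s(a,b)
    · exact absurd (sym2_congr hvp (h1.trans h2.symm)) hpq
    · rw [if_pos h1, if_neg h2]
      rcases Sym2.eq_iff.1 h1 with ⟨hv, hp⟩ | ⟨hv, hp⟩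
      · subst hv; exact fun hh => ha.2 q hvq hh.symm
      · subst hv; exact fun hh => hb.2 q hvq hh.symm
    · rw [if_neg h1, if_pos h2]
      rcases Sym2.eq_iff.1 h2 with ⟨hv, hq⟩ | ⟨hv, hq⟩
      · subst hv; exact ha.2 p hvp
      · subst hv; exact hb.2 p hvp
    · rw [if_neg h1, if_neg h2]
      exact h.2.2.2 v p q hvp hvq hpq (icc_ne_zero (h.2.2.1 v p hvp h1))

/-- rotating the hole one step along a fan -/
theorem rotate {a b z : V} {φ : V → V → ℕ}
    (hab : G.Adj a b) (haz : G.Adj a z) (hzb : z ≠ b)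
    (h : PartPC G k a b φ) (hlink : freeC G k φ b (φ a z)) :
    ∃ φ', PartPC G k a z φ' ∧
      (∀ u v, G.Adj u v → s(u,v) ≠ s(a,b) → s(u,v) ≠ s(a,z) → φ' u v = φ u v) ∧
      (∀ w, G.Adj a w → w ≠ b → w ≠ z → φ' a w = φ a w) ∧
      (∀ c, freeC G k φ' a c ↔ freeC G k φ a c) ∧
      (∀ c, freeC G k φ z c → freeC G k φ' z c) ∧
      freeC G k φ' z (φ a z) ∧
      (∀ v, v ≠ a → v ≠ b → v ≠ z → ∀ c, (freeC G k φ' v c ↔ freeC G k φ v c)) := by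
  obtain ⟨hsym, hhole, hcol, hprop⟩ := h
  have hcicc := hlink.1
  have hczero : φ a z ≠ 0 := icc_ne_zero hlink.1
  have hza : z ≠ a := fun hh => G.loopless.irrefl a (hh ▸ haz)
  set c := φ a z with hc
  refine ⟨fun u v => if s(u,v) = s(a,b) then c else if s(u,v) = s(a,z) then 0 else φ u v,
    ?_⟩
  set φ' : V → V → ℕ :=
    fun u v => if s(u,v) = s(a,b) then c else if s(u,v) = s(a,z) then 0 else φ u v with hφ'
  have hvab : ∀ u v, s(u,v) = s(a,b) → φ' u v = c := fun u v h1 => by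
    simp only [hφ', if_pos h1]
  have hvaz : ∀ u v, s(u,v) ≠ s(a,b) → s(u,v) = s(a,z) → φ' u v = 0 := fun u v h1 h2 => by
    simp only [hφ', if_neg h1, if_pos h2]
  have hvel : ∀ u v, s(u,v) ≠ s(a,b) → s(u,v) ≠ s(a,z) → φ' u v = φ u v := fun u v h1 h2 => by
    simp only [hφ', if_neg h1, if_neg h2]
  have hne1 : s(a,z) ≠ s(a,b) := fun hh => hzb (sym2_congr haz hh)
  have hna : ∀ v u, v ≠ a → v ≠ b → s(v,u) ≠ s(a,b) := by
    intro v u h1 h2 hh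
    rcases Sym2.eq_iff.1 hh with ⟨hv, _⟩ | ⟨hv, _⟩
    · exact h1 hv
    · exact h2 hv
  have hnz : ∀ v u, v ≠ a → v ≠ z → s(v,u) ≠ s(a,z) := by
    intro v u h1 h2 hh
    rcases Sym2.eq_iff.1 hh with ⟨hv, _⟩ | ⟨hv, _⟩
    · exact h1 hv
    · exact h2 hv
  have hz_a : s(z,a) ≠ s(a,b) := by rw [Sym2.eq_swap]; exact hne1
  have hz_edge : ∀ u, u ≠ a → s(z,u) ≠ s(a,z) := by
    intro u hua hh
    rcases Sym2.eq_iff.1 hh with ⟨hv, _⟩ | ⟨_, hv⟩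
    · exact hza hv
    · exact hua hv
  refine ⟨⟨?_, ?_, ?_, ?_⟩, ?_, ?_, ?_, ?_, ?_, ?_⟩
  · -- symmetry
    intro u v
    show φ' u v = φ' v u
    simp only [hφ']
    rw [Sym2.eq_swap (a := v) (b := u), hsym u v]
  · -- hole
    exact hvaz a z hne1 rfl
  · -- colors
    intro u v huv hne
    by_cases h1 : s(u,v) = s(a,b)
    · rw [hvab u v h1]; exact hcicc
    · rw [hvel u v h1 hne]; exact hcol u v huv h1
  · -- properness
    intro v p q hvp hvq hpq hp0
    by_cases h1 : s(v,p) = s(a,b)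
    · rw [hvab v p h1] at hp0 ⊢
      by_cases h2 : s(v,q) = s(a,b)
      · exact absurd (sym2_congr hvp (h1.trans h2.symm)) hpq
      by_cases h3 : s(v,q) = s(a,z)
      · rw [hvaz v q h2 h3]; exact hczero
      · rw [hvel v q h2 h3]
        rcases Sym2.eq_iff.1 h1 with ⟨hv, hp⟩ | ⟨hv, hp⟩
        · rw [hv] at hvq h3 ⊢
          exact hprop a z q haz hvq (fun hzq => h3 (by rw [← hzq])) hczero
        · rw [hv] at hvq ⊢
          exact fun hh => hlink.2 q hvq hh.symm
    by_cases h2 : s(v,p) = s(a,z)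
    · rw [hvaz v p h1 h2] at hp0; exact absurd rfl hp0
    rw [hvel v p h1 h2] at hp0 ⊢
    by_cases h3 : s(v,q) = s(a,b)
    · rw [hvab v q h3]
      rcases Sym2.eq_iff.1 h3 with ⟨hv, hq⟩ | ⟨hv, hq⟩
      · rw [hv] at hvp h2 hp0 ⊢
        exact hprop a p z hvp haz (fun hpz => h2 (by rw [hpz])) hp0
      · rw [hv] at hvp ⊢
        exact hlink.2 p hvp
    by_cases h4 : s(v,q) = s(a,z)
    · rw [hvaz v q h3 h4]; exact hp0
    · rw [hvel v q h3 h4]; exact hprop v p q hvp hvq hpq hp0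
  · -- edges unchanged
    intro u v _ h1 h2; exact hvel u v h1 h2
  · -- edges at a unchanged
    intro w hw hwb hwz
    exact hvel a w (fun hh => hwb (sym2_congr hw hh)) (fun hh => hwz (sym2_congr hw hh))
  · -- free at a preserved
    intro c'
    constructor
    · rintro ⟨hi, hf⟩
      refine ⟨hi, fun u hu => ?_⟩
      by_cases hub : u = b
      · rw [hub, hhole]; exact fun hh => icc_ne_zero hi hh.symm
      by_cases huz : u = z
      · rw [huz]
        have := hf b hab; rwa [hvab a b rfl] at this
      · have := hf u hu
        rwa [hvel a u (fun hh => hub (sym2_congr hu hh)) (fun hh => huz (sym2_congr hu hh))]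
          at this
    · rintro ⟨hi, hf⟩
      refine ⟨hi, fun u hu => ?_⟩
      by_cases hub : u = b
      · rw [hub, hvab a b rfl]; exact hf z haz
      by_cases huz : u = z
      · rw [huz, hvaz a z hne1 rfl]; exact fun hh => icc_ne_zero hi hh.symm
      · rw [hvel a u (fun hh => hub (sym2_congr hu hh)) (fun hh => huz (sym2_congr hu hh))]
        exact hf u hu
  · -- free at z monotone
    rintro c' ⟨hi, hf⟩
    refine ⟨hi, fun u hu => ?_⟩
    by_cases hua : u = a
    · rw [hua, hvaz z a hz_a Sym2.eq_swap]
      exact fun hh => icc_ne_zero hi hh.symm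
    · rw [hvel z u (hna z u hza hzb) (hz_edge u hua)]; exact hf u hu
  · -- old color free at z
    refine ⟨hcicc, fun u hu => ?_⟩
    by_cases hua : u = a
    · rw [hua, hvaz z a hz_a Sym2.eq_swap]
      exact fun hh => hczero hh.symm
    · rw [hvel z u (hna z u hza hzb) (hz_edge u hua)]
      have h0 : φ z u ≠ 0 := icc_ne_zero (hcol z u hu (hna z u hza hzb))
      have := hprop z u a hu haz.symm hua h0
      rwa [← hsym a z] at this
  · -- other vertices unchanged
    intro v hva hvb hvz c'
    exact free_congr (fun u hu => hvel v u (hna v u hva hvb) (hnz v u hva hvz)) c'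

theorem chain'_congr {R S : V → V → Prop} :
    ∀ {L : List V}, (∀ p q, p ∈ L → q ∈ L.tail → R p q → S p q) → L.IsChain R → L.IsChain S := by
  intro L
  induction L with
  | nil => intro _ _; exact List.isChain_nil
  | cons x t ih =>
    intro h hc
    cases t with
    | nil => exact List.isChain_singleton x
    | cons y t2 =>
      rw [List.isChain_cons_cons] at hc ⊢
      refine ⟨h x y (by simp) (by simp) hc.1, ?_⟩
      exact ih (fun p q hp hq => h p q (List.mem_cons_of_mem _ hp)
        (by simp only [List.tail_cons] at hq ⊢; exact List.mem_cons_of_mem _ hq)) hc.2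

/-- shifting the hole to the end of a fan chain -/
theorem shift {a b u : V} {φ : V → V → ℕ} {L : List V}
    (h : PartPC G k a b φ) (hL : Ch G k a b φ L) (hend : L.getLast? = some u) :
    ∃ ψ, PartPC G k a u ψ ∧
      (∀ c, freeC G k ψ a c ↔ freeC G k φ a c) ∧
      (∀ c, freeC G k φ u c → freeC G k ψ u c) := by
  induction L generalizing b φ with
  | nil => exact absurd hL.1 (by simp)
  | cons x L' ih =>
    obtain ⟨hhead, hnd, hadj, hch⟩ := hL
    have hbx : x = b := by simpa using hhead
    subst hbx
    cases L' with
    | nil =>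
      have hu : x = u := by simpa using hend
      subst hu
      exact ⟨φ, h, fun c => Iff.rfl, fun c => id⟩
    | cons z rest =>
      have hab : G.Adj a x := hadj x (by simp)
      have haz : G.Adj a z := hadj z (by simp)
      have hbnotin : x ∉ (z :: rest) := (List.nodup_cons.1 hnd).1
      have hndz : (z :: rest).Nodup := hnd.of_cons
      have hznotin : z ∉ rest := (List.nodup_cons.1 hndz).1
      have hzb : z ≠ x := fun hh => hbnotin (hh ▸ List.mem_cons_self (a := z) (l := rest))
      have hlink : freeC G k φ x (φ a z) := (List.isChain_cons_cons.1 hch).1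
      obtain ⟨φ', h1, h2, h3, h4, h5, h6, h7⟩ := rotate hab haz hzb h hlink
      have hch' : Ch G k a z φ' (z :: rest) := by
        refine ⟨rfl, hndz, fun w hw => hadj w (List.mem_cons_of_mem _ hw), ?_⟩
        refine chain'_congr (fun p q hp hq hR => ?_) (List.isChain_cons_cons.1 hch).2
        have hq' : q ∈ rest := by simpa using hq
        have hqb : q ≠ x := fun hh => hbnotin (hh ▸ List.mem_cons_of_mem _ hq')
        have hqz : q ≠ z := fun hh => hznotin (hh ▸ hq')
        rw [h3 q (hadj q (List.mem_cons_of_mem _ (List.mem_cons_of_mem _ hq'))) hqb hqz]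
        rcases List.mem_cons.1 hp with hp1 | hp1
        · subst hp1; exact h5 _ hR
        · have hpadj : G.Adj a p :=
            hadj p (List.mem_cons_of_mem _ (List.mem_cons_of_mem _ hp1))
          have hpa : p ≠ a := fun hh => G.loopless.irrefl a (hh ▸ hpadj)
          have hpb : p ≠ x := fun hh => hbnotin (hh ▸ List.mem_cons_of_mem _ hp1)
          have hpz : p ≠ z := fun hh => hznotin (hh ▸ hp1)
          exact (h7 p hpa hpb hpz _).2 hR
      have hend' : (z :: rest).getLast? = some u := by
        rw [← List.getLast?_cons_cons (a := x)]; exact hend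
      obtain ⟨ψ, hψ1, hψ2, hψ3⟩ := ih h1 hch' hend'
      refine ⟨ψ, hψ1, fun c => (hψ2 c).trans (h4 c), fun c hc => hψ3 c ?_⟩
      have hu_mem : u ∈ z :: rest := List.mem_of_mem_getLast? (by simp [hend'])
      rcases List.mem_cons.1 hu_mem with hu1 | hu1
      · subst hu1; exact h5 c hc
      · have huadj : G.Adj a u :=
          hadj u (List.mem_cons_of_mem _ (List.mem_cons_of_mem _ hu1))
        have hua : u ≠ a := fun hh => G.loopless.irrefl a (hh ▸ huadj)
        have hub : u ≠ x := fun hh => hbnotin (hh ▸ List.mem_cons_of_mem _ hu1)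
        have huz : u ≠ z := fun hh => hznotin (hh ▸ hu1)
        exact (h7 u hua hub huz c).2 hc

/-- Lemma 1: a color free at the center is not free at any fan-chain vertex -/
theorem lem1 (hnc : ¬ ∃ ψ, IsEdgeColoring G k ψ) {a b u : V} {φ : V → V → ℕ} {L : List V} {c : ℕ}
    (h : PartPC G k a b φ) (hL : Ch G k a b φ L) (hend : L.getLast? = some u)
    (ha : freeC G k φ a c) (hu : freeC G k φ u c) : False := by
  obtain ⟨ψ, h1, h2, h3⟩ := shift h hL hend
  have hu_mem : u ∈ L := List.mem_of_mem_getLast? (by simp [hend])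
  exact ext_contra hnc (hL.2.2.1 u hu_mem) h1 ((h2 c).2 ha) (h3 c hu)

theorem sw_invol {δ γ c : ℕ} : sw δ γ (sw δ γ c) = c := by
  unfold sw; split_ifs <;> omega

theorem sw_zero {δ γ : ℕ} (hδ : δ ≠ 0) (hγ : γ ≠ 0) : sw δ γ 0 = 0 := by
  unfold sw; split_ifs <;> omega

theorem sw_icc {δ γ c : ℕ} (hδ : δ ∈ Finset.Icc 1 k) (hγ : γ ∈ Finset.Icc 1 k) :
    sw δ γ c ∈ Finset.Icc 1 k ↔ c ∈ Finset.Icc 1 k := by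
  unfold sw; split_ifs <;> simp only [Finset.mem_Icc] at * <;> omega

theorem sw_eq_iff {δ γ x c : ℕ} : sw δ γ x = c ↔ x = sw δ γ c :=
  ⟨fun h => by rw [← h, sw_invol], fun h => by rw [h, sw_invol]⟩

/-- swapping colors δ, γ on the Kempe component of z₀ -/
theorem swap_comp {a b : V} {φ : V → V → ℕ} {δ γ : ℕ}
    (h : PartPC G k a b φ) (hδ : δ ∈ Finset.Icc 1 k) (hγ : γ ∈ Finset.Icc 1 k)
    (hne : δ ≠ γ) (z₀ : V) :
    ∃ φ', PartPC G k a b φ' ∧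
      (∀ v u, ¬ (KG G φ δ γ).Reachable z₀ v → G.Adj v u → φ' v u = φ v u) ∧
      (∀ v c, ¬ (KG G φ δ γ).Reachable z₀ v → (freeC G k φ' v c ↔ freeC G k φ v c)) ∧
      (∀ v c, (KG G φ δ γ).Reachable z₀ v → (freeC G k φ' v c ↔ freeC G k φ v (sw δ γ c))) := by
  classical
  obtain ⟨hsym, hhole, hcol, hprop⟩ := h
  have hδ0 : δ ≠ 0 := icc_ne_zero hδ
  have hγ0 : γ ≠ 0 := icc_ne_zero hγ
  set R := (KG G φ δ γ).Reachable z₀ with hRdef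
  have hclos : ∀ u v, R u → G.Adj u v →
      (φ u v = δ ∨ φ u v = γ ∨ φ v u = δ ∨ φ v u = γ) → R v := by
    intro u v hu huv hc
    exact hu.trans (SimpleGraph.Adj.reachable ⟨huv, by tauto⟩)
  refine ⟨fun u v => if R u ∨ R v then sw δ γ (φ u v) else φ u v, ?_⟩
  set φ' : V → V → ℕ := fun u v => if R u ∨ R v then sw δ γ (φ u v) else φ u v with hφ'
  have hm : ∀ v u, R v → φ' v u = sw δ γ (φ v u) := fun v u hv => by
    simp only [hφ', if_pos (Or.inl hv)]
  have hnm : ∀ v u, ¬ R v → G.Adj v u → φ' v u = φ v u := by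
    intro v u hv hvu
    by_cases hu : R u
    · have h1 : φ v u ≠ δ := fun hh => hv (hclos u v hu hvu.symm (Or.inr (Or.inr (Or.inl hh))))
      have h2 : φ v u ≠ γ := fun hh =>
        hv (hclos u v hu hvu.symm (Or.inr (Or.inr (Or.inr hh))))
      simp only [hφ', if_pos (Or.inr hu)]
      unfold sw; rw [if_neg h1, if_neg h2]
    · simp only [hφ', if_neg (show ¬ (R v ∨ R u) by tauto)]
  refine ⟨⟨?_, ?_, ?_, ?_⟩, fun v u hv hvu => hnm v u hv hvu,
    fun v c hv => free_congr (fun u hu => hnm v u hv hu) c, ?_⟩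
  · -- symmetry
    intro u v
    show (if R u ∨ R v then sw δ γ (φ u v) else φ u v)
        = (if R v ∨ R u then sw δ γ (φ v u) else φ v u)
    by_cases hc : R u ∨ R v
    · rw [if_pos hc, if_pos (Or.symm hc), hsym u v]
    · rw [if_neg hc, if_neg (fun hh => hc (Or.symm hh)), hsym u v]
  · -- hole
    show (if R a ∨ R b then sw δ γ (φ a b) else φ a b) = 0
    by_cases hc : R a ∨ R b
    · rw [if_pos hc, hhole, sw_zero hδ0 hγ0]
    · rw [if_neg hc, hhole]
  · -- colors
    intro u v huv hnedge
    show (if R u ∨ R v then sw δ γ (φ u v) else φ u v) ∈ Finset.Icc 1 k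
    by_cases hc : R u ∨ R v
    · rw [if_pos hc]; exact (sw_icc hδ hγ).2 (hcol u v huv hnedge)
    · rw [if_neg hc]; exact hcol u v huv hnedge
  · -- properness
    intro v p q hvp hvq hpq hp0
    by_cases hv : R v
    · rw [hm v p hv] at hp0 ⊢
      rw [hm v q hv]
      have h0 : φ v p ≠ 0 := fun hh => hp0 (by rw [hh, sw_zero hδ0 hγ0])
      have hneq := hprop v p q hvp hvq hpq h0
      intro hh
      exact hneq (by rw [← sw_invol (δ := δ) (γ := γ) (c := φ v p), hh, sw_invol])
    · rw [hnm v p hv hvp] at hp0 ⊢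
      rw [hnm v q hv hvq]
      exact hprop v p q hvp hvq hpq hp0
  · -- member free iff
    intro v c hv
    constructor
    · rintro ⟨hi, hf⟩
      refine ⟨(sw_icc hδ hγ).2 hi, fun u hu => ?_⟩
      intro hh
      exact hf u hu (by rw [hm v u hv, hh, sw_invol])
    · rintro ⟨hi, hf⟩
      refine ⟨(sw_icc hδ hγ).1 hi, fun u hu => ?_⟩
      rw [hm v u hv]
      intro hh
      exact hf u hu (sw_eq_iff.1 hh)

theorem walk_prefix (H : SimpleGraph V)
    (hdeg2 : ∀ v p q r, H.Adj v p → H.Adj v q → H.Adj v r → p = q ∨ p = r ∨ q = r) :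
    ∀ {a u u' prev : V} (p : H.Walk a u) (q : H.Walk a u'), p.IsPath → q.IsPath →
      H.Adj prev a → prev ∉ p.support → prev ∉ q.support →
      ((∀ w ∈ p.support, w ∈ q.support) ∨ (∀ w ∈ q.support, w ∈ p.support)) := by
  intro a u u' prev p
  induction p generalizing u' prev with
  | nil =>
    intro q _ _ _ _ _
    left; intro w hw
    simp only [SimpleGraph.Walk.support_nil, List.mem_singleton] at hw
    subst hw; exact q.start_mem_support
  | @cons a c u hac p ih =>
    intro q hp hq hprev hnp hnq
    cases q with
    | nil =>
      right; intro w hw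
      simp only [SimpleGraph.Walk.support_nil, List.mem_singleton] at hw
      subst hw; exact (SimpleGraph.Walk.cons hac p).start_mem_support
    | @cons _ d _ had q2 =>
      have hprevc : prev ≠ c := fun hh => hnp (by
        rw [SimpleGraph.Walk.support_cons, hh]
        exact List.mem_cons_of_mem _ p.start_mem_support)
      have hprevd : prev ≠ d := fun hh => hnq (by
        rw [SimpleGraph.Walk.support_cons, hh]
        exact List.mem_cons_of_mem _ q2.start_mem_support)
      have hcd : c = d := by
        rcases hdeg2 a prev c d hprev.symm hac had with h1 | h1 | h1
        · exact absurd h1 hprevc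
        · exact absurd h1 hprevd
        · exact h1
      subst hcd
      have hp2 := (SimpleGraph.Walk.cons_isPath_iff hac p).1 hp
      have hq2 := (SimpleGraph.Walk.cons_isPath_iff had q2).1 hq
      rcases ih q2 hp2.1 hq2.1 hac hp2.2 hq2.2 with h1 | h1
      · left; intro w hw
        rw [SimpleGraph.Walk.support_cons] at hw ⊢
        rcases List.mem_cons.1 hw with hw1 | hw1
        · exact hw1 ▸ List.mem_cons_self
        · exact List.mem_cons_of_mem _ (h1 w hw1)
      · right; intro w hw
        rw [SimpleGraph.Walk.support_cons] at hw ⊢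
        rcases List.mem_cons.1 hw with hw1 | hw1
        · exact hw1 ▸ List.mem_cons_self
        · exact List.mem_cons_of_mem _ (h1 w hw1)

theorem second_vertex {H : SimpleGraph V} {s t : V} (p : H.Walk s t) (hst : s ≠ t) :
    ∃ n, H.Adj s n ∧ n ∈ p.support.tail := by
  cases p with
  | nil => exact absurd rfl hst
  | cons h p' =>
    exact ⟨_, h, by
      rw [SimpleGraph.Walk.support_cons, List.tail_cons]; exact p'.start_mem_support⟩

theorem path_interior (H : SimpleGraph V) {a u' w : V} (q : H.Walk a u') (hq : q.IsPath)
    (hw : w ∈ q.support) (hwa : w ≠ a) (hwu : w ≠ u') :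
    ∃ n₁ n₂, n₁ ≠ n₂ ∧ H.Adj w n₁ ∧ H.Adj w n₂ := by
  classical
  have hnd : q.support.Nodup := hq.support_nodup
  have hspec := q.take_spec hw
  rw [← hspec, SimpleGraph.Walk.support_append] at hnd
  have hdisj := List.disjoint_of_nodup_append hnd
  obtain ⟨n₂, ha2, hm2⟩ := second_vertex (q.dropUntil w hw) hwu
  obtain ⟨n₁, ha1, hm1⟩ := second_vertex (q.takeUntil w hw).reverse hwa
  have hm1' : n₁ ∈ (q.takeUntil w hw).support := by
    have := List.mem_of_mem_tail hm1
    rwa [SimpleGraph.Walk.support_reverse, List.mem_reverse] at this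
  exact ⟨n₁, n₂, fun hh => hdisj hm1' (hh ▸ hm2), ha1, ha2⟩

/-- in a graph of max degree ≤ 2, three distinct degree-≤1 vertices cannot be
mutually reachable -/
theorem no_three (H : SimpleGraph V)
    (hdeg2 : ∀ v p q r, H.Adj v p → H.Adj v q → H.Adj v r → p = q ∨ p = r ∨ q = r)
    {x u u' : V}
    (hdx : ∀ p q, H.Adj x p → H.Adj x q → p = q)
    (hdu : ∀ p q, H.Adj u p → H.Adj u q → p = q)
    (hdu' : ∀ p q, H.Adj u' p → H.Adj u' q → p = q)
    (hxu : x ≠ u) (hxu' : x ≠ u') (huu' : u ≠ u')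
    (h1 : H.Reachable x u) (h2 : H.Reachable x u') : False := by
  classical
  obtain ⟨p0⟩ := h1
  obtain ⟨q0⟩ := h2
  obtain ⟨pw, hpw⟩ := p0.toPath
  obtain ⟨qw, hqw⟩ := q0.toPath
  cases pw with
  | nil => exact hxu rfl
  | @cons _ c _ hac p1 =>
    cases qw with
    | nil => exact hxu' rfl
    | @cons _ d _ had q1 =>
      have hcd : c = d := hdx c d hac had
      subst hcd
      have hp2 := (SimpleGraph.Walk.cons_isPath_iff hac p1).1 hpw
      have hq2 := (SimpleGraph.Walk.cons_isPath_iff had q1).1 hqw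
      rcases walk_prefix H hdeg2 p1 q1 hp2.1 hq2.1 hac hp2.2 hq2.2 with hincl | hincl
      · have humem : u ∈ (SimpleGraph.Walk.cons had q1).support := by
          rw [SimpleGraph.Walk.support_cons]
          exact List.mem_cons_of_mem _ (hincl u p1.end_mem_support)
        obtain ⟨n1, n2, hnn, ha1, ha2⟩ :=
          path_interior H (SimpleGraph.Walk.cons had q1) hqw humem (Ne.symm hxu) huu'
        exact hnn (hdu n1 n2 ha1 ha2)
      · have humem : u' ∈ (SimpleGraph.Walk.cons hac p1).support := by
          rw [SimpleGraph.Walk.support_cons]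
          exact List.mem_cons_of_mem _ (hincl u' q1.end_mem_support)
        obtain ⟨n1, n2, hnn, ha1, ha2⟩ :=
          path_interior H (SimpleGraph.Walk.cons hac p1) hpw humem (Ne.symm hxu') huu'.symm
        exact hnn (hdu' n1 n2 ha1 ha2)

theorem exists_free_at_center {a b : V} {φ : V → V → ℕ} (h : PartPC G k a b φ)
    (hab : G.Adj a b) (hdeg : G.degree a ≤ k) : ∃ δ, freeC G k φ a δ := by
  classical
  set img := (G.neighborFinset a).image (φ a) with himg
  have hbmem : b ∈ G.neighborFinset a := by rw [SimpleGraph.mem_neighborFinset]; exact hab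
  have h0 : (0 : ℕ) ∈ img := Finset.mem_image.2 ⟨b, hbmem, h.2.1⟩
  have hcard : img.card ≤ G.degree a := Finset.card_image_le
  have hkey : (Finset.Icc 1 k \ img.erase 0).Nonempty := by
    rw [← Finset.card_pos]
    have h1 : (img.erase 0).card = img.card - 1 := Finset.card_erase_of_mem h0
    have h2 : (Finset.Icc 1 k).card = k := by simp
    have h3 := Finset.card_le_card_sdiff_add_card (s := Finset.Icc 1 k) (t := img.erase 0)
    have h4 : 0 < img.card := Finset.card_pos.2 ⟨0, h0⟩
    omega
  obtain ⟨δ, hδ⟩ := hkey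
  rw [Finset.mem_sdiff] at hδ
  exact ⟨δ, hδ.1, fun v hv hh => hδ.2 (Finset.mem_erase.2 ⟨icc_ne_zero hδ.1,
    Finset.mem_image.2 ⟨v, by rw [SimpleGraph.mem_neighborFinset]; exact hv, hh⟩⟩)⟩

theorem ch_take {a b : V} {φ : V → V → ℕ} {L : List V} (h : Ch G k a b φ L) (i : ℕ)
    (hi : 0 < i) : Ch G k a b φ (L.take i) := by
  refine ⟨?_, List.Nodup.sublist (List.take_sublist i L) h.2.1,
    fun z hz => h.2.2.1 z (List.mem_of_mem_take hz), h.2.2.2.take i⟩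
  have hh := h.1
  cases L with
  | nil => simpa using hh
  | cons y t =>
    cases i with
    | zero => omega
    | succ i => simpa using hh

theorem getLast?_take {L : List V} (b : V) (i : ℕ) (h : i < L.length) :
    (L.take (i+1)).getLast? = some (L.getD i b) := by
  rw [List.getLast?_eq_getElem?, List.length_take]
  have h1 : min (i+1) L.length = i + 1 := by omega
  rw [h1]
  simp only [Nat.add_sub_cancel, List.getElem?_take, if_pos (Nat.lt_succ_self i)]
  rw [List.getElem?_eq_getElem h, List.getD_eq_getElem L b h]

theorem ch_link {a b : V} {φ : V → V → ℕ} {L : List V} (h : Ch G k a b φ L) (i : ℕ)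
    (hi : i + 1 < L.length) : freeC G k φ (L.getD i b) (φ a (L.getD (i+1) b)) := by
  have hh := List.isChain_iff_getElem.1 h.2.2.2 i (by omega)
  have e1 : L.getD i b = L.get ⟨i, by omega⟩ := by
    rw [List.getD_eq_getElem L b (by omega)]; rfl
  have e2 : L.getD (i+1) b = L.get ⟨i+1, hi⟩ := by
    rw [List.getD_eq_getElem L b hi]; rfl
  rw [e1, e2]; exact hh

theorem get_take_eq {L : List V} (b : V) {i j : ℕ} (h : j < (L.take i).length) :
    (L.take i).get ⟨j, h⟩ = L.getD j b := by
  have hj : j < L.length := by rw [List.length_take] at h; omega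
  rw [List.getD_eq_getElem L b hj]
  simp [List.get_eq_getElem, List.getElem_take]

/-- Lemma 2: two distinct fan-chain endpoints have no common free color -/
theorem lem2 (hnc : ¬ ∃ ψ, IsEdgeColoring G k ψ)
    (hdeg : ∀ v, G.degree v ≤ k) :
    ∀ n : ℕ, ∀ {a b u u' : V} {φ : V → V → ℕ} {C C' : List V} {γ : ℕ},
    PartPC G k a b φ → G.Adj a b →
    Ch G k a b φ C → Ch G k a b φ C' →
    C.getLast? = some u → C'.getLast? = some u' →
    C.length + C'.length ≤ n → u ≠ u' →
    freeC G k φ u γ → freeC G k φ u' γ → False := by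
  intro n
  induction n with
  | zero =>
    intro a b u u' φ C C' γ hP hab hC hC' hu hu' hlen huu hfu hfu'
    have hne : C ≠ [] := by intro hh; rw [hh] at hC; exact (by simpa using hC.1)
    have := List.length_pos_iff.2 hne
    omega
  | succ n ihn =>
    intro a b u u' φ C C' γ hP hab hC hC' hu hu' hlen huu hfu hfu'
    classical
    obtain ⟨δ, hδa⟩ := exists_free_at_center hP hab (hdeg a)
    have hγa : ¬ freeC G k φ a γ := fun hh => lem1 hnc hP hC hu hh hfu
    have hδγ : δ ≠ γ := fun hh => hγa (hh ▸ hδa)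
    have hδ0 : δ ≠ 0 := icc_ne_zero hδa.1
    have hγ0 : γ ≠ 0 := icc_ne_zero hfu.1
    have hsymφ := hP.1
    have hcolH : ∀ v w, (KG G φ δ γ).Adj v w → (φ v w = δ ∨ φ v w = γ) := by
      intro v w hvw
      obtain ⟨h1, h2⟩ := hvw
      rcases h2 with h | h | h | h
      · exact Or.inl h
      · exact Or.inl (by rw [hsymφ v w]; exact h)
      · exact Or.inr h
      · exact Or.inr (by rw [hsymφ v w]; exact h)
    have hne0' : ∀ {x : ℕ}, (x = δ ∨ x = γ) → x ≠ 0 := by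
      rintro x (h | h) <;> omega
    have hH2 : ∀ v p q r, (KG G φ δ γ).Adj v p → (KG G φ δ γ).Adj v q →
        (KG G φ δ γ).Adj v r → p = q ∨ p = r ∨ q = r := by
      intro v p q r h1 h2 h3
      by_contra hcon
      push_neg at hcon
      have c1 := hcolH v p h1
      have c2 := hcolH v q h2
      have c3 := hcolH v r h3
      have d12 := hP.2.2.2 v p q h1.1 h2.1 hcon.1 (hne0' c1)
      have d13 := hP.2.2.2 v p r h1.1 h3.1 hcon.2.1 (hne0' c1)
      have d23 := hP.2.2.2 v q r h2.1 h3.1 hcon.2.2 (hne0' c2)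
      omega
    have hd1 : ∀ v c0, freeC G k φ v c0 → (c0 = δ ∨ c0 = γ) →
        ∀ p q, (KG G φ δ γ).Adj v p → (KG G φ δ γ).Adj v q → p = q := by
      intro v c0 hfree hc0 p q h1 h2
      by_contra hpq
      have c1 := hcolH v p h1
      have c2 := hcolH v q h2
      have d := hP.2.2.2 v p q h1.1 h2.1 hpq (hne0' c1)
      have e1 := hfree.2 p h1.1
      have e2 := hfree.2 q h2.1
      omega
    have hau : G.Adj a u := hC.2.2.1 u (List.mem_of_mem_getLast? (by simp [hu]))
    have hau' : G.Adj a u' := hC'.2.2.1 u' (List.mem_of_mem_getLast? (by simp [hu']))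
    have hnb : (KG G φ δ γ).Reachable a u → (KG G φ δ γ).Reachable a u' → False :=
      fun r1 r2 =>
      no_three (KG G φ δ γ) hH2 (hd1 a δ hδa (Or.inl rfl)) (hd1 u γ hfu (Or.inr rfl))
        (hd1 u' γ hfu' (Or.inr rfl)) (G.ne_of_adj hau) (G.ne_of_adj hau') huu r1 r2
    have core : ∀ (C₁ C₂ : List V) (u₁ u₂ : V), Ch G k a b φ C₁ → Ch G k a b φ C₂ →
        C₁.getLast? = some u₁ → C₂.getLast? = some u₂ →
        C₁.length + C₂.length ≤ n + 1 → u₁ ≠ u₂ →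
        freeC G k φ u₁ γ → freeC G k φ u₂ γ → ¬ (KG G φ δ γ).Reachable a u₂ → False := by
      intro C₁ C₂ u₁ u₂ hC₁ hC₂ hu₁ hu₂ hlen₁ hne₁ hf₁ hf₂ hnr
      obtain ⟨φ', hP', hEdge, hNM, hM⟩ := swap_comp hP hδa.1 hf₂.1 hδγ u₂
      have hnra : ¬ (KG G φ δ γ).Reachable u₂ a := fun hh => hnr hh.symm
      have hfa' : freeC G k φ' a δ := (hNM a δ hnra).2 hδa
      have hswδ : sw δ γ δ = γ := by unfold sw; rw [if_pos rfl]
      have hfu₂' : freeC G k φ' u₂ δ :=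
        (hM u₂ δ (SimpleGraph.Reachable.refl u₂)).2 (by rw [hswδ]; exact hf₂)
      have hEa : ∀ w, G.Adj a w → φ' a w = φ a w := fun w hw => hEdge a w hnra hw
      by_cases hsurv : C₂.IsChain (fun p q => freeC G k φ' p (φ' a q))
      · exact lem1 hnc hP' ⟨hC₂.1, hC₂.2.1, hC₂.2.2.1, hsurv⟩ hu₂ hfa' hfu₂'
      · have hex : ∃ j, j + 1 < C₂.length ∧
            ¬ freeC G k φ' (C₂.getD j b) (φ' a (C₂.getD (j+1) b)) := by
          rw [List.isChain_iff_getElem] at hsurv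
          push_neg at hsurv
          obtain ⟨j, hj, hbad⟩ := hsurv
          refine ⟨j, by omega, fun hc => hbad ?_⟩
          have e1 : C₂.getD j b = C₂.get ⟨j, by omega⟩ := by
            rw [List.getD_eq_getElem C₂ b (by omega)]; rfl
          have e2 : C₂.getD (j+1) b = C₂.get ⟨j+1, by omega⟩ := by
            rw [List.getD_eq_getElem C₂ b (by omega)]; rfl
          rw [e1, e2] at hc; exact hc
        obtain ⟨hilt, hbrk⟩ := Nat.find_spec hex
        set i := Nat.find hex with hidef
        have hmin : ∀ j, j < i → j + 1 < C₂.length →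
            freeC G k φ' (C₂.getD j b) (φ' a (C₂.getD (j+1) b)) := by
          intro j hj hjl
          by_contra hcc
          exact Nat.find_min hex hj ⟨hjl, hcc⟩
        set z := C₂.getD i b with hzdef
        set z' := C₂.getD (i+1) b with hz'def
        have hz'mem : z' ∈ C₂ := by
          rw [hz'def, List.getD_eq_getElem C₂ b hilt]; exact List.getElem_mem _
        have hz'adj : G.Adj a z' := hC₂.2.2.1 z' hz'mem
        have hea : φ' a z' = φ a z' := hEa z' hz'adj
        rw [hea] at hbrk
        have hlink : freeC G k φ z (φ a z') := ch_link hC₂ i hilt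
        have htake : Ch G k a b φ (C₂.take (i+1)) := ch_take hC₂ (i+1) (by omega)
        have htend : (C₂.take (i+1)).getLast? = some z := getLast?_take b i (by omega)
        have hlt : (C₂.take (i+1)).length = i + 1 := by rw [List.length_take]; omega
        by_cases hRz : (KG G φ δ γ).Reachable u₂ z
        · have hiff := hM z (φ a z') hRz
          have hnfree : ¬ freeC G k φ z (sw δ γ (φ a z')) := fun hc => hbrk (hiff.2 hc)
          by_cases hcδ : φ a z' = δ
          · exact lem1 hnc hP htake htend hδa (hcδ ▸ hlink)
          by_cases hcγ : φ a z' = γ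
          · have hfzγ : freeC G k φ z γ := hcγ ▸ hlink
            by_cases hzu : z = u₁
            · have hsurv'' : (C₂.take (i+1)).IsChain
                  (fun p q => freeC G k φ' p (φ' a q)) := by
                rw [List.isChain_iff_getElem]
                intro j hjl
                rw [hlt] at hjl
                have hj2 : j + 1 < C₂.length := by omega
                have hres := hmin j (by omega) hj2
                rw [← get_take_eq (L := C₂) (i := i+1) b (j := j) (by omega),
                  ← get_take_eq (L := C₂) (i := i+1) b (j := j+1) (by omega)] at hres
                exact hres
              have hfu₁' : freeC G k φ' u₁ δ :=
                (hM u₁ δ (hzu ▸ hRz)).2 (by rw [hswδ]; exact hf₁)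
              exact lem1 hnc hP' ⟨htake.1, htake.2.1, htake.2.2.1, hsurv''⟩
                (hzu ▸ htend) hfa' hfu₁'
            · exact ihn hP hab htake hC₁ htend hu₁ (by omega) hzu hfzγ hf₁
          · have hid : sw δ γ (φ a z') = φ a z' := by
              unfold sw; rw [if_neg hcδ, if_neg hcγ]
            exact hnfree (by rw [hid]; exact hlink)
        · exact hbrk ((hNM z (φ a z') hRz).2 hlink)
    by_cases hr : (KG G φ δ γ).Reachable a u'
    · exact core C' C u' u hC' hC hu' hu (by omega) huu.symm hfu' hfu
        (fun hh => hnb hh hr)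
    · exact core C C' u u' hC hC' hu hu' hlen huu hfu hfu' hr

end VALaux

/-- Vizing's Adjacency Lemma: if `G` is a `Δ`-critical simple graph, then for any edge
`xy ∈ E(G)`, the vertex `y` is adjacent to at least `Δ - d(x) + 1` vertices `z` of degree `Δ`
with `z ≠ x`. -/
theorem statement5 {V : Type*} [Fintype V] [DecidableEq V]
    (G : SimpleGraph V) [DecidableRel G.Adj] (hG : IsDeltaCritical G)
    {x y : V} (hxy : G.Adj x y) :
    G.maxDegree - G.degree x + 1 ≤
      ((G.neighborFinset y).filter fun z => z ≠ x ∧ G.degree z = G.maxDegree).card := by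
  classical
  open VALaux in
  set k := G.maxDegree with hk
  have hnc : ¬ ∃ ψ, IsEdgeColoring G k ψ := by
    rintro ⟨ψ, hψ⟩
    have h1 : chromIndex G ≤ k := Nat.sInf_le ⟨ψ, hψ⟩
    rw [hG.2.1] at h1; omega
  have hee : s(y,x) ∈ G.edgeSet := (SimpleGraph.mem_edgeSet G).2 hxy.symm
  have hdel := hG.2.2 s(y,x) hee
  have hnonempty :
      {N | ∃ φ : V → V → ℕ, IsEdgeColoring (G.deleteEdges {s(y,x)}) N φ}.Nonempty := by
    refine ⟨Fintype.card (Sym2 V),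
      fun u v => (Fintype.equivFin (Sym2 V) s(u,v)).1 + 1, ?_, ?_, ?_⟩
    · intro u v
      show ((Fintype.equivFin (Sym2 V)) s(u,v) : ℕ) + 1
          = ((Fintype.equivFin (Sym2 V)) s(v,u) : ℕ) + 1
      rw [Sym2.eq_swap (a := u) (b := v)]
    · intro u v _
      show ((Fintype.equivFin (Sym2 V)) s(u,v) : ℕ) + 1 ∈ Finset.Icc 1 (Fintype.card (Sym2 V))
      simp only [Finset.mem_Icc]
      have := (Fintype.equivFin (Sym2 V) s(u,v)).2
      omega
    · intro v p q h1 h2 hpq heq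
      dsimp only at heq
      have hs : s(v,p) = s(v,q) :=
        (Fintype.equivFin (Sym2 V)).injective (Fin.val_injective (by omega))
      exact hpq (VALaux.sym2_congr h1 hs)
  obtain ⟨φdel, hφdel⟩ : ∃ φ, IsEdgeColoring (G.deleteEdges {s(y,x)}) k φ := by
    have hmem := Nat.sInf_mem hnonempty
    unfold chromIndex at hdel
    rw [hdel] at hmem
    exact hmem
  obtain ⟨hsymD, hcolD, hprD⟩ := hφdel
  have hadjD : ∀ {u v : V}, G.Adj u v → s(u,v) ≠ s(y,x) → (G.deleteEdges {s(y,x)}).Adj u v := by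
    intro u v h1 h2
    rw [SimpleGraph.deleteEdges_adj]
    exact ⟨h1, by simpa using h2⟩
  set φ : V → V → ℕ := fun u v => if s(u,v) = s(y,x) then 0 else φdel u v with hφ
  have hvhole : ∀ u v, s(u,v) = s(y,x) → φ u v = 0 := fun u v h1 => by
    simp only [hφ, if_pos h1]
  have hvel : ∀ u v, s(u,v) ≠ s(y,x) → φ u v = φdel u v := fun u v h1 => by
    simp only [hφ, if_neg h1]
  have hP : PartPC G k y x φ := by
    refine ⟨?_, hvhole y x rfl, ?_, ?_⟩
    · intro u v
      show (if s(u,v) = s(y,x) then 0 else φdel u v) = (if s(v,u) = s(y,x) then 0 else φdel v u)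
      rw [Sym2.eq_swap (a := v) (b := u), hsymD u v]
    · intro u v huv hne
      rw [hvel u v hne]
      exact hcolD (hadjD huv hne)
    · intro v p q hvp hvq hpq hp0
      by_cases h1 : s(v,p) = s(y,x)
      · rw [hvhole v p h1] at hp0; exact absurd rfl hp0
      by_cases h2 : s(v,q) = s(y,x)
      · rw [hvhole v q h2, hvel v p h1]
        exact fun hh => hp0 (by rw [hvel v p h1]; exact hh)
      · rw [hvel v p h1, hvel v q h2]
        exact hprD (hadjD hvp h1) (hadjD hvq h2) hpq
  have hdeg : ∀ v, G.degree v ≤ k := fun v => G.degree_le_maxDegree v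
  set fs : V → Finset ℕ :=
    fun v => (Finset.Icc 1 k).filter (fun c => ∀ u ∈ G.neighborFinset v, φ v u ≠ c) with hfs
  have hfs_iff : ∀ v c, c ∈ fs v ↔ freeC G k φ v c := by
    intro v c
    simp only [hfs, Finset.mem_filter, SimpleGraph.mem_neighborFinset]
    constructor
    · rintro ⟨h1, h2⟩; exact ⟨h1, fun u hu => h2 u hu⟩
    · rintro ⟨h1, h2⟩; exact ⟨h1, fun u hu => h2 u hu⟩
  set F : Finset V := Finset.univ.filter
    (fun v => ∃ L, Ch G k y x φ L ∧ L.getLast? = some v) with hF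
  have hFmem : ∀ v, v ∈ F ↔ ∃ L, Ch G k y x φ L ∧ L.getLast? = some v := by
    intro v; simp [hF]
  have hxch : Ch G k y x φ [x] := by
    refine ⟨rfl, List.nodup_singleton x, ?_, List.isChain_singleton x⟩
    intro z hz
    simp only [List.mem_singleton] at hz
    subst hz
    exact hxy.symm
  have hxF : x ∈ F := (hFmem x).2 ⟨[x], hxch, rfl⟩
  have hFadj : ∀ v ∈ F, G.Adj y v := by
    intro v hv
    obtain ⟨L, hL, hend⟩ := (hFmem v).1 hv
    exact hL.2.2.1 v (List.mem_of_mem_getLast? (by simp [hend]))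
  have hdisj : ∀ v ∈ F, ∀ w ∈ F, v ≠ w → Disjoint (fs v) (fs w) := by
    intro v hv w hw hvw
    obtain ⟨L1, hL1, he1⟩ := (hFmem v).1 hv
    obtain ⟨L2, hL2, he2⟩ := (hFmem w).1 hw
    rw [Finset.disjoint_left]
    intro c hc1 hc2
    exact VALaux.lem2 hnc hdeg (L1.length + L2.length) hP hxy.symm hL1 hL2 he1 he2 le_rfl hvw
      ((hfs_iff v c).1 hc1) ((hfs_iff w c).1 hc2)
  have hclosure : ∀ v ∈ F, ∀ c ∈ fs v, ∃ w ∈ F.erase x, φ y w = c ∧ G.Adj y w := by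
    intro v hv c hc
    obtain ⟨L, hL, hend⟩ := (hFmem v).1 hv
    have hfree := (hfs_iff v c).1 hc
    have hnfy : ¬ freeC G k φ y c := fun hh => VALaux.lem1 hnc hP hL hend hh hfree
    have hex : ∃ w, G.Adj y w ∧ φ y w = c := by
      by_contra hcon
      push_neg at hcon
      exact hnfy ⟨hfree.1, fun u hu => hcon u hu⟩
    obtain ⟨w, hadjw, hcolw⟩ := hex
    have hwx : w ≠ x := fun hh => by
      rw [hh, hP.2.1] at hcolw
      exact VALaux.icc_ne_zero hfree.1 hcolw.symm
    refine ⟨w, Finset.mem_erase.2 ⟨hwx, ?_⟩, hcolw, hadjw⟩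
    by_cases hwL : w ∈ L
    · obtain ⟨j, hj, hjw⟩ := List.mem_iff_getElem.1 hwL
      refine (hFmem w).2 ⟨L.take (j+1), VALaux.ch_take hL (j+1) (by omega), ?_⟩
      rw [VALaux.getLast?_take x j hj, List.getD_eq_getElem L x hj, hjw]
    · refine (hFmem w).2 ⟨L ++ [w], ⟨?_, ?_, ?_, ?_⟩, ?_⟩
      · have hLne : L ≠ [] := by
          intro hh; rw [hh] at hL; exact (by simpa using hL.1)
        cases L with
        | nil => exact absurd rfl hLne
        | cons p t => simpa using hL.1
      · rw [List.nodup_append]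
        refine ⟨hL.2.1, List.nodup_singleton w, ?_⟩
        intro z hz
        simp only [List.mem_singleton]
        intro b hb hzw
        subst hb
        exact hwL (hzw ▸ hz)
      · intro z hz
        rcases List.mem_append.1 hz with h1 | h1
        · exact hL.2.2.1 z h1
        · simp only [List.mem_singleton] at h1
          subst h1
          exact hadjw
      · rw [List.isChain_append]
        refine ⟨hL.2.2.2, List.isChain_singleton w, ?_⟩
        intro p hp q hq
        simp only [List.head?_cons, Option.mem_some_iff] at hq
        subst hq
        rw [hend] at hp
        simp only [Option.mem_some_iff] at hp
        subst hp
        rw [hcolw]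
        exact hfree
      · rw [List.getLast?_concat]
  set F1 := (F.erase x).filter (fun v => G.degree v < k) with hF1
  set F2 := (F.erase x).filter (fun v => ¬ G.degree v < k) with hF2
  have hsplit : F1.card + F2.card = (F.erase x).card :=
    Finset.card_filter_add_card_filter_not _
  have hcard_fs : ∀ v, k ≤ (fs v).card + G.degree v := by
    intro v
    have h1 : (Finset.Icc 1 k).filter (fun c => ¬ ∀ u ∈ G.neighborFinset v, φ v u ≠ c)
        ⊆ (G.neighborFinset v).image (φ v) := by
      intro c hc
      rw [Finset.mem_filter] at hc
      push_neg at hc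
      obtain ⟨u, hu, hcu⟩ := hc.2
      exact Finset.mem_image.2 ⟨u, hu, hcu⟩
    have h2 := Finset.card_le_card h1
    have h3 : ((G.neighborFinset v).image (φ v)).card ≤ G.degree v := Finset.card_image_le
    have h4 := Finset.card_filter_add_card_filter_not
      (s := Finset.Icc 1 k) (p := fun c => ∀ u ∈ G.neighborFinset v, φ v u ≠ c)
    have h5 : (Finset.Icc 1 k).card = k := by simp
    have h6 : fs v = (Finset.Icc 1 k).filter
        (fun c => ∀ u ∈ G.neighborFinset v, φ v u ≠ c) := rfl
    rw [h6]
    omega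
  have hymem : y ∈ G.neighborFinset x := by
    rw [SimpleGraph.mem_neighborFinset]; exact hxy
  have hcard_fsx : k + 1 ≤ (fs x).card + G.degree x := by
    have h1 : (Finset.Icc 1 k).filter (fun c => ¬ ∀ u ∈ G.neighborFinset x, φ x u ≠ c)
        ⊆ ((G.neighborFinset x).image (φ x)).erase 0 := by
      intro c hc
      rw [Finset.mem_filter] at hc
      push_neg at hc
      obtain ⟨u, hu, hcu⟩ := hc.2
      exact Finset.mem_erase.2 ⟨VALaux.icc_ne_zero hc.1, Finset.mem_image.2 ⟨u, hu, hcu⟩⟩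
    have h0mem : (0:ℕ) ∈ (G.neighborFinset x).image (φ x) :=
      Finset.mem_image.2 ⟨y, hymem, by rw [hP.1 x y]; exact hP.2.1⟩
    have h2 := Finset.card_le_card h1
    have h3 : ((G.neighborFinset x).image (φ x)).card ≤ G.degree x := Finset.card_image_le
    have h3' := Finset.card_erase_of_mem h0mem
    have h4 := Finset.card_filter_add_card_filter_not
      (s := Finset.Icc 1 k) (p := fun c => ∀ u ∈ G.neighborFinset x, φ x u ≠ c)
    have h5 : (Finset.Icc 1 k).card = k := by simp
    have h6 : fs x = (Finset.Icc 1 k).filter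
        (fun c => ∀ u ∈ G.neighborFinset x, φ x u ≠ c) := rfl
    have hdx : 0 < ((G.neighborFinset x).image (φ x)).card :=
      Finset.card_pos.2 ⟨0, h0mem⟩
    rw [h6]
    omega
  have hsum_lb : (fs x).card + F1.card ≤ ∑ v ∈ F, (fs v).card := by
    rw [← Finset.add_sum_erase F _ hxF]
    refine Nat.add_le_add le_rfl ?_
    calc F1.card = ∑ _v ∈ F1, 1 := by simp
    _ ≤ ∑ v ∈ F1, (fs v).card := by
        refine Finset.sum_le_sum (fun v hv => ?_)
        rw [hF1, Finset.mem_filter] at hv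
        have := hcard_fs v
        omega
    _ ≤ ∑ v ∈ F.erase x, (fs v).card := Finset.sum_le_sum_of_subset (Finset.filter_subset _ _)
  have hbiU : (F.biUnion fs).card = ∑ v ∈ F, (fs v).card := Finset.card_biUnion hdisj
  have hinj : (F.biUnion fs).card ≤ (F.erase x).card := by
    refine Finset.card_le_card_of_injOn
      (fun c => if h : ∃ w, G.Adj y w ∧ φ y w = c then h.choose else x) ?_ ?_
    · intro c hc
      obtain ⟨v, hvF, hcv⟩ := Finset.mem_biUnion.1 hc
      obtain ⟨w, hwF, hcolw, hadjw⟩ := hclosure v hvF c hcv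
      have hex : ∃ w, G.Adj y w ∧ φ y w = c := ⟨w, hadjw, hcolw⟩
      show (if h : ∃ w, G.Adj y w ∧ φ y w = c then h.choose else x) ∈ F.erase x
      rw [dif_pos hex]
      have hspec := hex.choose_spec
      have hcne : φ y hex.choose ≠ 0 := by
        rw [hspec.2]
        exact VALaux.icc_ne_zero ((hfs_iff v c).1 hcv).1
      have heqw : hex.choose = w := by
        by_contra hnew
        exact hP.2.2.2 y hex.choose w hspec.1 hadjw hnew hcne (by rw [hspec.2, hcolw])
      rw [heqw]
      exact hwF
    · intro c1 h1 c2 h2 heq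
      obtain ⟨v1, hv1, hc1⟩ := Finset.mem_biUnion.1 h1
      obtain ⟨w1, _, hcol1, hadj1⟩ := hclosure v1 hv1 c1 hc1
      obtain ⟨v2, hv2, hc2⟩ := Finset.mem_biUnion.1 h2
      obtain ⟨w2, _, hcol2, hadj2⟩ := hclosure v2 hv2 c2 hc2
      have hex1 : ∃ w, G.Adj y w ∧ φ y w = c1 := ⟨w1, hadj1, hcol1⟩
      have hex2 : ∃ w, G.Adj y w ∧ φ y w = c2 := ⟨w2, hadj2, hcol2⟩
      simp only [dif_pos hex1, dif_pos hex2] at heq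
      rw [← hex1.choose_spec.2, ← hex2.choose_spec.2, heq]
  have hF2sub : F2 ⊆ (G.neighborFinset y).filter (fun z => z ≠ x ∧ G.degree z = k) := by
    intro v hv
    rw [hF2, Finset.mem_filter] at hv
    obtain ⟨hv1, hv2⟩ := hv
    have hvF : v ∈ F := Finset.mem_of_mem_erase hv1
    have hvx : v ≠ x := (Finset.mem_erase.1 hv1).1
    refine Finset.mem_filter.2 ⟨?_, hvx, ?_⟩
    · rw [SimpleGraph.mem_neighborFinset]; exact hFadj v hvF
    · have := hdeg v; omega
  have htarget := Finset.card_le_card hF2sub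
  have hfinal : (fs x).card ≤ F2.card := by omega
  have hdx := hdeg x
  calc G.maxDegree - G.degree x + 1 = k - G.degree x + 1 := by rw [hk]
    _ ≤ F2.card := by omega
    _ ≤ _ := htarget
end

section
/- With the discharging setup below, for each x ∈ X^{++} ∪ X^+ one has M₂*(x) ≥ (d+2)Δ = M₂(x). -/
open Finset

variable {V : Type*}

noncomputable section

open scoped Classical

variable [Fintype V]

/-- `g₁(k) = (d+2)(Δ-k)/k`. -/
def g1 (d : ℕ) (Δ k : ℝ) : ℝ := ((d : ℝ) + 2) * (Δ - k) / k

/-- The set `X⁺ = {x ∈ X : q ≤ d(x) < Δ}`. -/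
def Xp (G : SimpleGraph V) [DecidableRel G.Adj] (q : ℝ) (X : Finset V) : Finset V :=
  X.filter fun x => q ≤ (G.degree x : ℝ) ∧ G.degree x < G.maxDegree

/-- The set `X⁻ = {x ∈ X : d ≤ d(x) < q}`. -/
def Xm (G : SimpleGraph V) [DecidableRel G.Adj] (d : ℕ) (q : ℝ) (X : Finset V) : Finset V :=
  X.filter fun x => d ≤ G.degree x ∧ (G.degree x : ℝ) < q

/-- The charge `M₁*(y)` of a vertex `y ∈ Y` after Step 1 of the discharging rule: starting
from `M₁(y) = ωΔ`, the vertex `y` gives charge `g₁(d(x))` to each `x ∈ N(y) ∩ X⁺`. -/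
def M1star (G : SimpleGraph V) [DecidableRel G.Adj] (d : ℕ) (ω q : ℝ) (X : Finset V)
    (y : V) : ℝ :=
  ω * G.maxDegree -
    ∑ x ∈ G.neighborFinset y ∩ Xp G q X, g1 d (G.maxDegree : ℝ) (G.degree x : ℝ)

/-- The charge that `y ∈ Y` gives to each vertex of `N(y) ∩ X⁻` in Step 2 of the discharging
rule: if `M₁*(y) > 0`, then `y` distributes its remaining charge equally among all vertices
(if any) of `N(y) ∩ X⁻`. -/
def step2 (G : SimpleGraph V) [DecidableRel G.Adj] (d : ℕ) (ω q : ℝ) (X : Finset V)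
    (y : V) : ℝ :=
  if 0 < M1star G d ω q X y ∧ (G.neighborFinset y ∩ Xm G d q X).Nonempty then
    M1star G d ω q X y / ((G.neighborFinset y ∩ Xm G d q X).card : ℝ)
  else 0

/-- The final charge `M₂*(y)` of a vertex `y ∈ Y`. -/
def M2starY (G : SimpleGraph V) [DecidableRel G.Adj] (d : ℕ) (ω q : ℝ) (X : Finset V)
    (y : V) : ℝ :=
  M1star G d ω q X y - ((G.neighborFinset y ∩ Xm G d q X).card : ℝ) * step2 G d ω q X y

/-- The final charge `M₂*(x)` of a vertex `x ∈ X`: starting from `M₁(x) = (d+2)d(x)`,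
`x` receives `g₁(d(x))` from each neighbor `y ∈ Y` in Step 1 if `x ∈ X⁺`, and receives the
Step-2 charge from each neighbor `y ∈ Y` if `x ∈ X⁻`. -/
def M2starX (G : SimpleGraph V) [DecidableRel G.Adj] (d : ℕ) (ω q : ℝ) (X : Finset V)
    (x : V) : ℝ :=
  ((d : ℝ) + 2) * G.degree x +
    (if x ∈ Xp G q X then
      ∑ y ∈ (G.neighborFinset x).filter (· ∉ X), g1 d (G.maxDegree : ℝ) (G.degree x : ℝ)
    else 0) +
    (if x ∈ Xm G d q X then
      ∑ y ∈ (G.neighborFinset x).filter (· ∉ X), step2 G d ω q X y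
    else 0)

/-- `σ_q(x,z) = |{u ∈ N(z) - {x} : d(u) ≥ q}|`. -/
def sigmaq (G : SimpleGraph V) [DecidableRel G.Adj] (q : ℝ) (x z : V) : ℕ :=
  ((G.neighborFinset z).filter fun u => u ≠ x ∧ q ≤ (G.degree u : ℝ)).card

end

variable [Fintype V]

/-- Discharging setup as in the paper. For each `x ∈ X⁺⁺ ∪ X⁺` one has
`M₂*(x) ≥ (d+2)Δ = M₂(x)`. -/
theorem statement15 (G : SimpleGraph V) [DecidableRel G.Adj]
    (d : ℕ) (hd : d = 3 ∨ d = 4 ∨ 19 ≤ d)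
    (hG : IsDeltaCritical G) (hmin : ∀ v : V, d ≤ G.degree v)
    (hmax : (d + 2) ^ (5 * d + 10) ≤ G.maxDegree)
    (X : Finset V) (hXind : ∀ u ∈ X, ∀ v ∈ X, u ≠ v → ¬ G.Adj u v)
    (hXmax : ∀ s : Finset V, (∀ u ∈ s, ∀ v ∈ s, u ≠ v → ¬ G.Adj u v) → s.card ≤ X.card)
    (ω : ℝ) (hω : ((d = 3 ∨ d = 4) ∧ ω = 2) ∨
      (19 ≤ d ∧ ω = (((d : ℝ) - 1) * d) ^ ((1 : ℝ) / 3)))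
    (q : ℝ) (hq : q = (((d : ℝ) + 2 - ω) / ((d : ℝ) + 2)) * G.maxDegree)
    (x : V) (hx : x ∈ X)
    (hdeg : G.degree x = G.maxDegree ∨ (q ≤ (G.degree x : ℝ) ∧ G.degree x < G.maxDegree)) :
    ((d : ℝ) + 2) * G.maxDegree ≤ M2starX G d ω q X x := by
  classical
  have hd3 : 3 ≤ d := by rcases hd with h|h|h <;> omega
  have hdegpos : 0 < (G.degree x : ℝ) := by
    have h1 : 0 < G.degree x := lt_of_lt_of_le (by omega) (hmin x)
    exact_mod_cast h1
  have hdle : (G.degree x : ℝ) ≤ (G.maxDegree : ℝ) := by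
    exact_mod_cast G.degree_le_maxDegree x
  have hstep2 : ∀ y, 0 ≤ step2 G d ω q X y := by
    intro y
    unfold step2
    split
    · next h => exact div_nonneg h.1.le (Nat.cast_nonneg _)
    · exact le_refl _
  have hNX : (G.neighborFinset x).filter (· ∉ X) = G.neighborFinset x := by
    apply Finset.filter_true_of_mem
    intro y hy hyX
    have hadj : G.Adj x y := by rwa [SimpleGraph.mem_neighborFinset] at hy
    exact hXind x hx y hyX (G.ne_of_adj hadj) hadj
  have hXmterm : 0 ≤ (if x ∈ Xm G d q X then
      ∑ y ∈ (G.neighborFinset x).filter (· ∉ X), step2 G d ω q X y else 0) := by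
    split
    · exact Finset.sum_nonneg fun y _ => hstep2 y
    · exact le_refl _
  rcases hdeg with heq | ⟨hq1, hq2⟩
  · have hXp : x ∉ Xp G q X := by
      simp only [Xp, Finset.mem_filter]
      rintro ⟨-, -, h2⟩
      omega
    unfold M2starX
    rw [if_neg hXp, heq]
    linarith
  · have hXp : x ∈ Xp G q X := by
      simp only [Xp, Finset.mem_filter]
      exact ⟨hx, hq1, hq2⟩
    have hXm : x ∉ Xm G d q X := by
      simp only [Xm, Finset.mem_filter]
      rintro ⟨-, -, h2⟩
      linarith
    unfold M2starX
    rw [if_pos hXp, if_neg hXm, hNX, Finset.sum_const, SimpleGraph.card_neighborFinset_eq_degree,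
      nsmul_eq_mul]
    unfold g1
    field_simp
    ring_nf
    nlinarith [hdegpos]
end

section
/- With the discharging setup below, let ℓ be a nonnegative integer, let x ∈ X^- with k = d(x), let y ∈ N(x) (so y ∈ Y), and assume ℓ ≤ k−2. If σ_q(x,y) ≥ Δ−k+1+ℓ, then in Step 2 the vertex y gives x charge at least h(k,ℓ) = (ωΔ − ℓ·(d+2)ω/(d+2−ω))/(k−ℓ−1). -/
open Finset

variable {V : Type*}

namespace VAux2
variable {V : Type*}

/-- In a graph where every vertex has at most 2 neighbors, two paths from a common start
to two distinct "degree ≤ 1" ends cannot both exist (inner induction). -/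
lemma walk_aux (H : SimpleGraph V)
    (h3 : ∀ v u1 u2 u3, H.Adj v u1 → H.Adj v u2 → H.Adj v u3 → u1 ≠ u2 → u1 ≠ u3 → u2 = u3) :
    ∀ n : ℕ, ∀ (u v a b : V) (hu : H.Adj u v) (P : H.Walk v a) (Q : H.Walk v b),
      P.length ≤ n → (SimpleGraph.Walk.cons hu P).IsPath → (SimpleGraph.Walk.cons hu Q).IsPath →
      a ≠ b → (∀ z1 z2, H.Adj a z1 → H.Adj a z2 → z1 = z2) →
      (∀ z1 z2, H.Adj b z1 → H.Adj b z2 → z1 = z2) → False := by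
  intro n
  induction n with
  | zero =>
    intro u v a b hu P Q hlen hP hQ hab ha hb
    cases P with
    | nil =>
      cases Q with
      | nil => exact hab rfl
      | cons h2' Q' =>
        rename_i w
        have huQ : u ∉ (SimpleGraph.Walk.cons h2' Q').support :=
          ((SimpleGraph.Walk.cons_isPath_iff _ _).1 hQ).2
        have hw : w ∈ (SimpleGraph.Walk.cons h2' Q').support := by
          rw [SimpleGraph.Walk.support_cons]
          exact List.mem_cons_of_mem _ Q'.start_mem_support
        have : u = w := ha u w hu.symm h2'
        exact huQ (this ▸ hw)
    | cons h1 P' => simp [SimpleGraph.Walk.length_cons] at hlen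
  | succ n ih =>
    intro u v a b hu P Q hlen hP hQ hab ha hb
    cases P with
    | nil =>
      cases Q with
      | nil => exact hab rfl
      | cons h2' Q' =>
        rename_i w
        have huQ : u ∉ (SimpleGraph.Walk.cons h2' Q').support :=
          ((SimpleGraph.Walk.cons_isPath_iff _ _).1 hQ).2
        have hw : w ∈ (SimpleGraph.Walk.cons h2' Q').support := by
          rw [SimpleGraph.Walk.support_cons]
          exact List.mem_cons_of_mem _ Q'.start_mem_support
        have : u = w := ha u w hu.symm h2'
        exact huQ (this ▸ hw)
    | cons h1 P' =>
      rename_i p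
      have huP : u ∉ (SimpleGraph.Walk.cons h1 P').support :=
        ((SimpleGraph.Walk.cons_isPath_iff _ _).1 hP).2
      have hpP : p ∈ (SimpleGraph.Walk.cons h1 P').support := by
        rw [SimpleGraph.Walk.support_cons]
        exact List.mem_cons_of_mem _ P'.start_mem_support
      have hup : u ≠ p := fun h => huP (h ▸ hpP)
      cases Q with
      | nil =>
        -- b = v
        have : u = p := hb u p hu.symm h1
        exact hup this
      | cons h2' Q' =>
        rename_i w
        have huQ : u ∉ (SimpleGraph.Walk.cons h2' Q').support :=
          ((SimpleGraph.Walk.cons_isPath_iff _ _).1 hQ).2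
        have hwQ : w ∈ (SimpleGraph.Walk.cons h2' Q').support := by
          rw [SimpleGraph.Walk.support_cons]
          exact List.mem_cons_of_mem _ Q'.start_mem_support
        have huw : u ≠ w := fun h => huQ (h ▸ hwQ)
        have hpw : p = w := h3 v u p w hu.symm h1 h2' hup huw
        subst hpw
        have hP' : (SimpleGraph.Walk.cons h1 P').IsPath :=
          ((SimpleGraph.Walk.cons_isPath_iff _ _).1 hP).1
        have hQ' : (SimpleGraph.Walk.cons h2' Q').IsPath :=
          ((SimpleGraph.Walk.cons_isPath_iff _ _).1 hQ).1
        have hlen' : P'.length ≤ n := by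
          simp [SimpleGraph.Walk.length_cons] at hlen; omega
        exact ih v p a b h1 P' Q' hlen' hP' hQ' hab ha hb

/-- a connected max-degree-2 graph cannot contain three distinct vertices of degree ≤ 1. -/
lemma three_ends (H : SimpleGraph V)
    (h3 : ∀ v u1 u2 u3, H.Adj v u1 → H.Adj v u2 → H.Adj v u3 → u1 ≠ u2 → u1 ≠ u3 → u2 = u3)
    (y a b : V)
    (hy : ∀ z1 z2, H.Adj y z1 → H.Adj y z2 → z1 = z2)
    (ha : ∀ z1 z2, H.Adj a z1 → H.Adj a z2 → z1 = z2)
    (hb : ∀ z1 z2, H.Adj b z1 → H.Adj b z2 → z1 = z2)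
    (hya : y ≠ a) (hyb : y ≠ b) (hab : a ≠ b)
    (hra : H.Reachable y a) (hrb : H.Reachable y b) : False := by
  classical
  obtain ⟨P0⟩ := hra
  obtain ⟨Q0⟩ := hrb
  obtain ⟨P, hP⟩ := P0.toPath
  obtain ⟨Q, hQ⟩ := Q0.toPath
  cases P with
  | nil => exact hya rfl
  | cons h1 P' =>
    rename_i p
    cases Q with
    | nil => exact hyb rfl
    | cons h2' Q' =>
      rename_i w
      have hpw : p = w := hy p w h1 h2'
      subst hpw
      exact walk_aux H h3 P'.length y p a b h1 P' Q' le_rfl hP hQ hab ha hb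

end VAux2

namespace VAux

noncomputable section
open scoped Classical

variable {V : Type*} [Fintype V] (G : SimpleGraph V) [DecidableRel G.Adj] (K : ℕ)

/-- colors in `[1,K]` not appearing on an edge at `v`. -/
def fr (ψ : V → V → ℕ) (v : V) : Finset ℕ :=
  (Icc 1 K).filter fun c => ∀ u ∈ G.neighborFinset v, ψ v u ≠ c

/-- partial coloring with precisely the edge `ab` uncolored (value 0). -/
def PC (ψ : V → V → ℕ) (a b : V) : Prop :=
  G.Adj a b ∧ (∀ u v, ψ u v = ψ v u) ∧ ψ a b = 0 ∧
  (∀ u v, G.Adj u v → s(u,v) ≠ s(a,b) → ψ u v ∈ Icc 1 K) ∧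
  (∀ v u w, G.Adj v u → G.Adj v w → u ≠ w → ψ v u = ψ v w → ψ v u = 0)

variable {G K}

lemma fr_mem_iff {ψ : V → V → ℕ} {v : V} {c : ℕ} :
    c ∈ fr G K ψ v ↔ c ∈ Icc 1 K ∧ ∀ u, G.Adj v u → ψ v u ≠ c := by
  simp [fr, SimpleGraph.mem_neighborFinset]

lemma zero_not_mem_Icc {c : ℕ} (h : c ∈ Icc 1 K) : c ≠ 0 := by
  simp only [mem_Icc] at h; omega

lemma PC.extend (hno : ∀ ψ, ¬ IsEdgeColoring G K ψ) {ψ : V → V → ℕ} {a b : V}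
    (hPC : PC G K ψ a b) {c : ℕ} (hca : c ∈ fr G K ψ a) (hcb : c ∈ fr G K ψ b) : False := by
  obtain ⟨hab, hsym, -, hcol, hprop⟩ := hPC
  rw [fr_mem_iff] at hca hcb
  apply hno (fun u v => if s(u,v) = s(a,b) then c else ψ u v)
  refine ⟨?_, ?_, ?_⟩
  · intro u v
    dsimp only
    by_cases h : s(u,v) = s(a,b)
    · rw [if_pos h, if_pos (by rwa [Sym2.eq_swap])]
    · rw [if_neg h, if_neg (by rwa [Sym2.eq_swap]), hsym]
  · intro u v huv
    dsimp only
    by_cases h : s(u,v) = s(a,b)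
    · rw [if_pos h]; exact hca.1
    · rw [if_neg h]; exact hcol u v huv h
  · intro v u w hvu hvw huw
    dsimp only
    by_cases h1 : s(v,u) = s(a,b) <;> by_cases h2 : s(v,w) = s(a,b)
    · exfalso
      rw [Sym2.eq_iff] at h1 h2
      rcases h1 with ⟨h1a, h1b⟩ | ⟨h1a, h1b⟩
      · subst h1a; subst h1b
        rcases h2 with ⟨-, h2b⟩ | ⟨h2a, -⟩
        · exact huw h2b.symm
        · rw [← h2a] at hvu; exact G.irrefl hvu
      · subst h1a; subst h1b
        rcases h2 with ⟨h2a, -⟩ | ⟨-, h2b⟩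
        · rw [← h2a] at hvu; exact G.irrefl hvu
        · exact huw h2b.symm
    · rw [if_pos h1, if_neg h2]
      intro hc
      rw [Sym2.eq_iff] at h1
      rcases h1 with ⟨h1a, h1b⟩ | ⟨h1a, h1b⟩
      · subst h1a; exact hca.2 w hvw hc.symm
      · subst h1a; exact hcb.2 w hvw hc.symm
    · rw [if_neg h1, if_pos h2]
      intro hc
      rw [Sym2.eq_iff] at h2
      rcases h2 with ⟨h2a, h2b⟩ | ⟨h2a, h2b⟩
      · subst h2a; exact hca.2 u hvu hc
      · subst h2a; exact hcb.2 u hvu hc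
    · rw [if_neg h1, if_neg h2]
      intro hc
      have := hprop v u w hvu hvw huw hc
      have h0 : ψ v u ∈ Icc 1 K := hcol v u hvu h1
      exact zero_not_mem_Icc h0 this

/-- `|fr ψ v| + deg v ≥ K`. -/
lemma fr_card (ψ : V → V → ℕ) (v : V) : K ≤ (fr G K ψ v).card + G.degree v := by
  classical
  have h1 : (Icc 1 K) \ ((G.neighborFinset v).image (ψ v)) ⊆ fr G K ψ v := by
    intro c hc
    rw [mem_sdiff] at hc
    rw [fr, mem_filter]
    refine ⟨hc.1, fun u hu he => hc.2 (mem_image.2 ⟨u, hu, he⟩)⟩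
  have h2 := card_le_card h1
  have h3 : ((Icc 1 K) \ ((G.neighborFinset v).image (ψ v))).card ≥
      (Icc 1 K).card - ((G.neighborFinset v).image (ψ v)).card := le_card_sdiff _ _
  have h4 : ((G.neighborFinset v).image (ψ v)).card ≤ G.degree v := card_image_le
  have h5 : (Icc 1 K).card = K := by simp
  omega

/-- at the endpoint of the uncolored edge one more color is free. -/
lemma fr_card_end {ψ : V → V → ℕ} {a b : V} (hPC : PC G K ψ a b) :
    K + 1 ≤ (fr G K ψ a).card + G.degree a := by
  classical
  obtain ⟨hab, hsym, h0, hcol, hprop⟩ := hPC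
  have h1 : (Icc 1 K) \ (((G.neighborFinset a).erase b).image (ψ a)) ⊆ fr G K ψ a := by
    intro c hc
    rw [mem_sdiff] at hc
    rw [fr, mem_filter]
    refine ⟨hc.1, fun u hu he => ?_⟩
    by_cases hub : u = b
    · subst hub; rw [h0] at he; exact zero_not_mem_Icc hc.1 he.symm
    · exact hc.2 (mem_image.2 ⟨u, mem_erase.2 ⟨hub, hu⟩, he⟩)
  have h2 := card_le_card h1
  have h3 : ((Icc 1 K) \ (((G.neighborFinset a).erase b).image (ψ a))).card ≥
      (Icc 1 K).card - (((G.neighborFinset a).erase b).image (ψ a)).card := le_card_sdiff _ _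
  have h4 : (((G.neighborFinset a).erase b).image (ψ a)).card ≤ ((G.neighborFinset a).erase b).card :=
    card_image_le
  have h5 : ((G.neighborFinset a).erase b).card = G.degree a - 1 := by
    rw [card_erase_of_mem (by rwa [SimpleGraph.mem_neighborFinset]), SimpleGraph.degree]
  have h6 : 1 ≤ G.degree a := by
    rw [← SimpleGraph.card_neighborFinset_eq_degree]
    exact card_pos.2 ⟨b, by rwa [SimpleGraph.mem_neighborFinset]⟩
  have h5' : (Icc 1 K).card = K := by simp
  omega

def kgr (G : SimpleGraph V) (ψ : V → V → ℕ) (β γ : ℕ) : SimpleGraph V :=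
  SimpleGraph.fromRel (fun u v => G.Adj u v ∧ (ψ u v = β ∨ ψ u v = γ))

lemma kgr_adj {G : SimpleGraph V} {ψ : V → V → ℕ} {β γ : ℕ}
    (hsym : ∀ u v, ψ u v = ψ v u) {u v : V} :
    (kgr G ψ β γ).Adj u v ↔ G.Adj u v ∧ (ψ u v = β ∨ ψ u v = γ) := by
  rw [kgr, SimpleGraph.fromRel_adj]
  constructor
  · rintro ⟨hne, h | h⟩
    · exact h
    · exact ⟨h.1.symm, by rw [hsym]; exact h.2⟩
  · intro h
    exact ⟨G.ne_of_adj h.1, Or.inl h⟩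

lemma kempe (hno : ∀ ψ, ¬ IsEdgeColoring G K ψ) {ψ : V → V → ℕ} {a b : V}
    (hPC : PC G K ψ a b) {β γ : ℕ}
    (hβ : β ∈ Icc 1 K) (hγ : γ ∈ Icc 1 K) (hβγ : β ≠ γ) (v0 : V) :
    ∃ ψ' : V → V → ℕ, PC G K ψ' a b ∧
      (∀ v, ¬ (kgr G ψ β γ).Reachable v0 v → ∀ u, ψ' v u = ψ v u) ∧
      (∀ u v, ψ' u v = ψ u v ∨ (ψ u v = β ∧ ψ' u v = γ) ∨ (ψ u v = γ ∧ ψ' u v = β)) ∧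
      (∀ v, (kgr G ψ β γ).Reachable v0 v → γ ∈ fr G K ψ v → β ∈ fr G K ψ' v) ∧
      (∀ v c, c ≠ β → c ≠ γ → (c ∈ fr G K ψ' v ↔ c ∈ fr G K ψ v)) := by
  obtain ⟨hab, hsym, h0, hcol, hprop⟩ := hPC
  have hβ0 : β ≠ 0 := zero_not_mem_Icc hβ
  have hγ0 : γ ≠ 0 := zero_not_mem_Icc hγ
  set H := kgr G ψ β γ with hH
  set ψ' : V → V → ℕ :=
    fun u v => if H.Adj u v ∧ H.Reachable v0 u then (if ψ u v = β then γ else β) else ψ u v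
    with hψ'
  have hadj : ∀ u v, H.Adj u v ↔ G.Adj u v ∧ (ψ u v = β ∨ ψ u v = γ) := fun u v => kgr_adj hsym
  have hcond : ∀ u v, (H.Adj u v ∧ H.Reachable v0 u) ↔ (H.Adj u v ∧ H.Reachable v0 v) := by
    intro u v
    constructor
    · rintro ⟨h1, h2⟩; exact ⟨h1, h2.trans h1.reachable⟩
    · rintro ⟨h1, h2⟩; exact ⟨h1, h2.trans h1.symm.reachable⟩
  -- changed edges are exactly H-edges in the component of v0
  have hchange : ∀ u v, (H.Adj u v ∧ H.Reachable v0 u) →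
      ((ψ u v = β ∧ ψ' u v = γ) ∨ (ψ u v = γ ∧ ψ' u v = β)) := by
    intro u v h
    rcases ((hadj u v).1 h.1).2 with hb | hg
    · left; refine ⟨hb, ?_⟩; rw [hψ']; simp only [if_pos h, if_pos hb]
    · right; refine ⟨hg, ?_⟩
      rw [hψ']; simp only [if_pos h]
      rw [hg, if_neg (fun hc => hβγ hc.symm)]
  have hunch : ∀ u v, ¬(H.Adj u v ∧ H.Reachable v0 u) → ψ' u v = ψ u v := by
    intro u v h; rw [hψ']; simp only [if_neg h]
  have hswap : ∀ u v, ψ' u v = ψ u v ∨ (ψ u v = β ∧ ψ' u v = γ) ∨ (ψ u v = γ ∧ ψ' u v = β) := by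
    intro u v
    by_cases h : H.Adj u v ∧ H.Reachable v0 u
    · right; exact hchange u v h
    · left; exact hunch u v h
  have hsym' : ∀ u v, ψ' u v = ψ' v u := by
    intro u v
    by_cases h : H.Adj u v ∧ H.Reachable v0 u
    · have h2 : H.Adj v u ∧ H.Reachable v0 v := ⟨h.1.symm, ((hcond u v).1 h).2⟩
      rw [hψ']; simp only [if_pos h, if_pos h2, hsym u v]
    · have h2 : ¬(H.Adj v u ∧ H.Reachable v0 v) := by
        intro h2
        exact h ⟨h2.1.symm, ((hcond v u).1 h2).2⟩
      rw [hψ']; simp only [if_neg h, if_neg h2, hsym u v]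
  refine ⟨ψ', ⟨hab, hsym', ?_, ?_, ?_⟩, ?_, hswap, ?_, ?_⟩
  · -- uncolored edge untouched
    have : ¬ H.Adj a b := by
      rw [hadj]
      rintro ⟨-, h | h⟩ <;> rw [h0] at h
      · exact hβ0 h.symm
      · exact hγ0 h.symm
    rw [hunch a b (fun hc => this hc.1), h0]
  · -- colors
    intro u v huv hne
    rcases hswap u v with h | ⟨-, h⟩ | ⟨-, h⟩
    · rw [h]; exact hcol u v huv hne
    · rw [h]; exact hγ
    · rw [h]; exact hβ
  · -- properness
    intro v u w hvu hvw huw heq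
    by_cases c1 : H.Adj v u ∧ H.Reachable v0 v <;> by_cases c2 : H.Adj v w ∧ H.Reachable v0 v
    · exfalso
      have d1 := hchange v u ⟨c1.1, c1.2⟩
      have d2 := hchange v w ⟨c2.1, c2.2⟩
      rcases d1 with ⟨e1, f1⟩ | ⟨e1, f1⟩ <;> rcases d2 with ⟨e2, f2⟩ | ⟨e2, f2⟩
      · exact hβ0 (e1.symm.trans (hprop v u w hvu hvw huw (e1.trans e2.symm)))
      · exact hβγ (f1 ▸ f2 ▸ heq).symm
      · exact hβγ (f1 ▸ f2 ▸ heq)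
      · exact hγ0 ((hprop v u w hvu hvw huw (e1.trans e2.symm)).symm.trans e1).symm
    · exfalso
      have d1 := hchange v u ⟨c1.1, c1.2⟩
      have h2 : ψ' v w = ψ v w := hunch v w c2
      have : H.Adj v w := by
        rw [hadj]
        refine ⟨hvw, ?_⟩
        rcases d1 with ⟨-, f1⟩ | ⟨-, f1⟩
        · right; rw [← h2, ← heq, f1]
        · left; rw [← h2, ← heq, f1]
      exact c2 ⟨this, c1.2⟩
    · exfalso
      have d2 := hchange v w ⟨c2.1, c2.2⟩
      have h1 : ψ' v u = ψ v u := hunch v u c1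
      have : H.Adj v u := by
        rw [hadj]
        refine ⟨hvu, ?_⟩
        rcases d2 with ⟨-, f2⟩ | ⟨-, f2⟩
        · right; rw [← h1, heq, f2]
        · left; rw [← h1, heq, f2]
      exact c1 ⟨this, c2.2⟩
    · rw [hunch v u c1] at heq ⊢
      rw [hunch v w c2] at heq
      exact hprop v u w hvu hvw huw heq
  · -- untouched vertices
    intro v hv u
    apply hunch
    intro h
    exact hv h.2
  · -- swap frees
    intro v hv hγv
    rw [fr_mem_iff] at hγv ⊢
    refine ⟨hβ, fun u hvu he => ?_⟩
    by_cases h : H.Adj v u ∧ H.Reachable v0 v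
    · rcases hchange v u ⟨h.1, h.2⟩ with ⟨e1, f1⟩ | ⟨e1, f1⟩
      · rw [f1] at he; exact hβγ he.symm
      · exact hγv.2 u hvu e1
    · rw [hunch v u h] at he
      have : H.Adj v u := by
        rw [hadj]; exact ⟨hvu, Or.inl he⟩
      exact h ⟨this, hv⟩
  · -- colors other than β, γ unchanged
    intro v c hcβ hcγ
    have key : ∀ u, ψ' v u = c ↔ ψ v u = c := by
      intro u
      rcases hswap v u with h | ⟨e, f⟩ | ⟨e, f⟩
      · rw [h]
      · rw [e, f]
        constructor
        · intro hc; exact absurd hc.symm hcγ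
        · intro hc; exact absurd hc.symm hcβ
      · rw [e, f]
        constructor
        · intro hc; exact absurd hc.symm hcβ
        · intro hc; exact absurd hc.symm hcγ
    rw [fr_mem_iff, fr_mem_iff]
    constructor
    · rintro ⟨h1, h2⟩; exact ⟨h1, fun u hu he => h2 u hu ((key u).2 he)⟩
    · rintro ⟨h1, h2⟩; exact ⟨h1, fun u hu he => h2 u hu ((key u).1 he)⟩

lemma sym2_ne {y u v0 : V} (h1 : u ≠ v0) (h2 : y ≠ v0) : s(y,u) ≠ s(y,v0) := by
  intro hh
  rw [Sym2.eq_iff] at hh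
  rcases hh with ⟨-, h⟩ | ⟨h, -⟩
  · exact h1 h
  · exact h2 h

lemma sym2_ne' {u z y t : V} (hu : u ≠ y) (hz : z ≠ y) : s(u,z) ≠ s(y,t) := by
  intro hh
  rw [Sym2.eq_iff] at hh
  rcases hh with ⟨h, -⟩ | ⟨-, h⟩
  · exact hu h
  · exact hz h

variable (G K) in
/-- multifan at `y` with uncolored edge `yx`, listed in reverse order. -/
inductive MF (φ : V → V → ℕ) (y x : V) : List V → Prop
  | base : MF φ y x [x]
  | cons {v : V} {L : List V} : MF φ y x L → v ∉ L → G.Adj y v →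
      (∃ w ∈ L, φ y v ∈ fr G K φ w) → MF φ y x (v :: L)

lemma MF.x_mem {φ : V → V → ℕ} {y x : V} {L : List V} (h : MF G K φ y x L) : x ∈ L := by
  induction h with
  | base => exact List.mem_singleton_self x
  | cons _ _ _ _ ih => exact List.mem_cons_of_mem _ ih

lemma MF.adj {φ : V → V → ℕ} {y x : V} {L : List V} (h : MF G K φ y x L)
    (hyx : G.Adj y x) : ∀ v ∈ L, G.Adj y v := by
  induction h with
  | base => intro v hv; rw [List.mem_singleton] at hv; subst hv; exact hyx
  | cons _ _ hadj _ ih =>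
    intro v hv
    rcases List.mem_cons.1 hv with rfl | hv
    · exact hadj
    · exact ih v hv

lemma MF.nodup {φ : V → V → ℕ} {y x : V} {L : List V} (h : MF G K φ y x L) : L.Nodup := by
  induction h with
  | base => exact List.nodup_singleton x
  | cons _ hnm _ _ ih => exact List.nodup_cons.2 ⟨hnm, ih⟩

lemma MF.suffix {φ : V → V → ℕ} {y x : V} {L : List V} (h : MF G K φ y x L) :
    ∀ w ∈ L, ∃ L'', MF G K φ y x (w :: L'') ∧ ∀ z ∈ (w :: L''), z ∈ L := by
  induction h with
  | base =>
    intro w hw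
    rw [List.mem_singleton] at hw; subst hw
    exact ⟨[], MF.base, fun z hz => hz⟩
  | @cons v L hMF hnm hadj hcond ih =>
    intro w hw
    rcases List.mem_cons.1 hw with rfl | hw
    · exact ⟨L, MF.cons hMF hnm hadj hcond, fun z hz => hz⟩
    · obtain ⟨L'', h1, h2⟩ := ih w hw
      exact ⟨L'', h1, fun z hz => List.mem_cons_of_mem _ (h2 z hz)⟩

lemma MF.rot {φ : V → V → ℕ} {y x : V} {L : List V} (hPC : PC G K φ y x)
    (hMF : MF G K φ y x L) :
    ∀ v ∈ L, ∃ ψ, PC G K ψ y v ∧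
      (∀ u w, u ≠ y → w ≠ y → ψ u w = φ u w) ∧
      (∀ u, u ∉ L → ψ y u = φ y u) ∧
      (∀ c, c ≠ 0 → ((∃ u, G.Adj y u ∧ ψ y u = c) ↔ (∃ u, G.Adj y u ∧ φ y u = c))) := by
  have hyx : G.Adj y x := hPC.1
  induction hMF with
  | base =>
    intro v hv
    rw [List.mem_singleton] at hv; subst hv
    exact ⟨φ, hPC, fun _ _ _ _ => rfl, fun _ _ => rfl, fun c _ => Iff.rfl⟩
  | @cons v0 L hMFL hnm hyv0 hcond ih =>
    intro v hv
    rcases List.mem_cons.1 hv with heq | hv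
    · -- rotate to the head v0
      have heq' : v0 = v := heq.symm
      subst heq'
      obtain ⟨w, hwL, hcw⟩ := hcond
      obtain ⟨ψw, hPCw, hR2, hR5, hR3⟩ := ih w hwL
      obtain ⟨hyw', hsymw, h0w, hcolw, hpropw⟩ := hPCw
      have hyv0' : y ≠ v0 := G.ne_of_adj hyv0
      have hyw : G.Adj y w := hMFL.adj hyx w hwL
      have hywne : y ≠ w := G.ne_of_adj hyw
      have hxney : y ≠ x := G.ne_of_adj hyx
      have hv0x : v0 ≠ x := fun h => hnm (h ▸ hMFL.x_mem)
      have hv0w : v0 ≠ w := fun h => hnm (h ▸ hwL)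
      set c := φ y v0 with hc
      have hcI : c ∈ Icc 1 K := hPC.2.2.2.1 y v0 hyv0 (sym2_ne hv0x hxney)
      have hc0 : c ≠ 0 := zero_not_mem_Icc hcI
      have hψwc : ψw y v0 = c := hR5 v0 hnm
      have hcwψ : c ∈ fr G K ψw w := by
        rw [fr_mem_iff]
        refine ⟨hcI, fun u hwu he => ?_⟩
        by_cases huy : u = y
        · rw [huy, hsymw w y, h0w] at he
          exact hc0 he.symm
        · rw [hR2 w u hywne.symm huy] at he
          exact (fr_mem_iff.1 hcw).2 u hwu he
      set ψ : V → V → ℕ :=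
        fun u z => if s(u,z) = s(y,v0) then 0 else if s(u,z) = s(y,w) then c else ψw u z
        with hψ
      have hval : ∀ u z, ψ u z = if s(u,z) = s(y,v0) then 0
          else if s(u,z) = s(y,w) then c else ψw u z := fun u z => rfl
      have hsymψ : ∀ u z, ψ u z = ψ z u := by
        intro u z
        rw [hval, hval, Sym2.eq_swap (a := z) (b := u)]
        by_cases h1 : s(u,z) = s(y,v0)
        · rw [if_pos h1, if_pos h1]
        · rw [if_neg h1, if_neg h1]
          by_cases h2 : s(u,z) = s(y,w)
          · rw [if_pos h2, if_pos h2]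
          · rw [if_neg h2, if_neg h2, hsymw]
      refine ⟨ψ, ⟨hyv0, hsymψ, ?_, ?_, ?_⟩, ?_, ?_, ?_⟩
      · rw [hval, if_pos rfl]
      · -- colors
        intro u z huz hne
        rw [hval, if_neg hne]
        by_cases h2 : s(u,z) = s(y,w)
        · rw [if_pos h2]; exact hcI
        · rw [if_neg h2]
          exact hcolw u z huz h2
      · -- properness
        intro v1 u1 u2 h1 h2 hne heq
        rw [hval, hval] at heq
        rw [hval]
        by_cases e1 : s(v1,u1) = s(y,v0)
        · rw [if_pos e1]
        · rw [if_neg e1] at heq ⊢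
          by_cases e2 : s(v1,u2) = s(y,v0)
          · rw [if_pos e2] at heq
            exact heq
          · rw [if_neg e2] at heq
            by_cases f1 : s(v1,u1) = s(y,w)
            · rw [if_pos f1] at heq ⊢
              exfalso
              by_cases f2 : s(v1,u2) = s(y,w)
              · exact hne (Sym2.congr_right.1 (f1.trans f2.symm))
              · rw [if_neg f2] at heq
                rcases Sym2.eq_iff.1 f1 with ⟨hv1y, hu1w⟩ | ⟨hv1w, hu1y⟩
                · rw [hv1y] at heq h2
                  have hu2v0 : u2 ≠ v0 := fun h => e2 (by rw [h, hv1y])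
                  have h9 := hpropw y u2 v0 h2 hyv0 hu2v0 (by rw [← heq, hψwc])
                  exact hc0 (heq.trans h9)
                · rw [hv1w] at heq h2
                  exact (fr_mem_iff.1 hcwψ).2 u2 h2 heq.symm
            · rw [if_neg f1] at heq ⊢
              by_cases f2 : s(v1,u2) = s(y,w)
              · exfalso
                rw [if_pos f2] at heq
                rcases Sym2.eq_iff.1 f2 with ⟨hv1y, hu2w⟩ | ⟨hv1w, hu2y⟩
                · rw [hv1y] at heq h1
                  have hu1v0 : u1 ≠ v0 := fun h => e1 (by rw [h, hv1y])
                  have h9 := hpropw y u1 v0 h1 hyv0 hu1v0 (by rw [heq, hψwc])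
                  exact hc0 (heq.symm.trans h9)
                · rw [hv1w] at heq h1
                  exact (fr_mem_iff.1 hcwψ).2 u1 h1 heq
              · rw [if_neg f2] at heq
                exact hpropw v1 u1 u2 h1 h2 hne heq
      · -- R2: non-y edges unchanged
        intro u z hu hz
        rw [hval, if_neg (sym2_ne' hu hz), if_neg (sym2_ne' hu hz)]
        exact hR2 u z hu hz
      · -- R5: y-edges outside the fan unchanged
        intro u hu
        have hu1 : u ≠ v0 := fun h => hu (by rw [h]; exact List.mem_cons_self)
        have hu2 : u ∉ L := fun h => hu (List.mem_cons_of_mem _ h)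
        have hu3 : u ≠ w := fun h => hu2 (h ▸ hwL)
        rw [hval, if_neg (sym2_ne hu1 hyv0'), if_neg (sym2_ne hu3 hywne)]
        exact hR5 u hu2
      · -- R3: set of colors present at y unchanged
        intro c' hc'
        rw [← hR3 c' hc']
        constructor
        · rintro ⟨u, hu, he⟩
          rw [hval] at he
          by_cases g1 : s(y,u) = s(y,v0)
          · rw [if_pos g1] at he; exact absurd he.symm hc'
          · rw [if_neg g1] at he
            by_cases g2 : s(y,u) = s(y,w)
            · rw [if_pos g2] at he
              exact ⟨v0, hyv0, by rw [hψwc, he]⟩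
            · rw [if_neg g2] at he
              exact ⟨u, hu, he⟩
        · rintro ⟨u, hu, he⟩
          by_cases g1 : u = w
          · subst g1
            rw [h0w] at he
            exact absurd he.symm hc'
          · by_cases g2 : u = v0
            · subst g2
              refine ⟨w, hyw, ?_⟩
              rw [hval, if_neg (sym2_ne hv0w.symm hyv0'), if_pos rfl, ← hψwc, he]
            · refine ⟨u, hu, ?_⟩
              rw [hval, if_neg (sym2_ne g2 hyv0'), if_neg (sym2_ne g1 hywne)]
              exact he
    · -- v in the tail
      obtain ⟨ψ, p1, p2, p3, p4⟩ := ih v hv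
      exact ⟨ψ, p1, p2, fun u hu => p3 u (fun h => hu (List.mem_cons_of_mem _ h)), p4⟩

lemma fr_subset_Icc {ψ : V → V → ℕ} {v : V} {c : ℕ} (h : c ∈ fr G K ψ v) : c ∈ Icc 1 K :=
  (mem_filter.1 h).1

lemma fr_congr {ψ φ : V → V → ℕ} {y : V} (h : ∀ u, ψ y u = φ y u) :
    fr G K ψ y = fr G K φ y := by
  ext c
  rw [fr_mem_iff, fr_mem_iff]
  constructor
  · rintro ⟨h1, h2⟩; exact ⟨h1, fun u hu he => h2 u hu (by rw [h u]; exact he)⟩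
  · rintro ⟨h1, h2⟩; exact ⟨h1, fun u hu he => h2 u hu (by rw [← h u]; exact he)⟩

lemma fr_y_of_R3 {ψ φ : V → V → ℕ} {y : V}
    (h : ∀ c, c ≠ 0 → ((∃ u, G.Adj y u ∧ ψ y u = c) ↔ (∃ u, G.Adj y u ∧ φ y u = c))) :
    fr G K ψ y = fr G K φ y := by
  ext c
  rw [fr_mem_iff, fr_mem_iff]
  constructor
  · rintro ⟨h1, h2⟩
    refine ⟨h1, fun u hu he => ?_⟩
    obtain ⟨u', hu', he'⟩ := (h c (zero_not_mem_Icc h1)).2 ⟨u, hu, he⟩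
    exact h2 u' hu' he'
  · rintro ⟨h1, h2⟩
    refine ⟨h1, fun u hu he => ?_⟩
    obtain ⟨u', hu', he'⟩ := (h c (zero_not_mem_Icc h1)).1 ⟨u, hu, he⟩
    exact h2 u' hu' he'

lemma fr_mono_rot {ψ φ : V → V → ℕ} {y v : V} (hPCψ : PC G K ψ y v)
    (hR2 : ∀ u w, u ≠ y → w ≠ y → ψ u w = φ u w) : fr G K φ v ⊆ fr G K ψ v := by
  intro c hc
  rw [fr_mem_iff] at hc ⊢
  have hvy : v ≠ y := (G.ne_of_adj hPCψ.1).symm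
  refine ⟨hc.1, fun u hu he => ?_⟩
  by_cases huy : u = y
  · rw [huy, hPCψ.2.1 v y, hPCψ.2.2.1] at he
    exact zero_not_mem_Icc hc.1 he.symm
  · rw [hR2 v u hvy huy] at he
    exact hc.2 u hu he

/-- Theorem (1): colors free at `y` are not free at any fan vertex. -/
lemma MF.fr_y_disj (hno : ∀ ψ, ¬ IsEdgeColoring G K ψ) {φ : V → V → ℕ} {y x : V} {L : List V}
    (hPC : PC G K φ y x) (hMF : MF G K φ y x L) :
    ∀ v ∈ L, ∀ c, c ∈ fr G K φ y → c ∈ fr G K φ v → False := by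
  intro v hv c hcy hcv
  obtain ⟨ψ, hPCψ, hR2, hR5, hR3⟩ := hMF.rot hPC v hv
  have h1 : c ∈ fr G K ψ y := by rw [fr_y_of_R3 hR3]; exact hcy
  have h2 : c ∈ fr G K ψ v := fr_mono_rot hPCψ hR2 hcv
  exact PC.extend hno hPCψ h1 h2

/-- reconstruction of a multifan after a Kempe swap not touching `y`. -/
lemma MF.reconstruct (hno : ∀ ψ, ¬ IsEdgeColoring G K ψ) {φ φ' : V → V → ℕ} {y x : V}
    {L : List V} {β γ : ℕ}
    (hPC : PC G K φ y x) (hPC' : PC G K φ' y x)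
    (hyedges : ∀ z, φ' y z = φ y z)
    (hMFbig : MF G K φ y x L)
    (hβy : β ∈ fr G K φ y)
    (hfr1 : ∀ w (cz : ℕ), cz ≠ β → cz ≠ γ → (cz ∈ fr G K φ' w ↔ cz ∈ fr G K φ w)) :
    ∀ L1, MF G K φ y x L1 → (∀ z ∈ L1, z ∈ L) →
      MF G K φ' y x L1 ∨
        ∃ w ∈ L1, γ ∈ fr G K φ w ∧ γ ∉ fr G K φ' w ∧
          ∃ L'', MF G K φ' y x (w :: L'') := by
  intro L1 hMF1
  induction hMF1 with
  | base => intro _; exact Or.inl MF.base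
  | @cons v0 L2 hMF2 hnm hadj hcond ih =>
    intro hsub
    have hsub2 : ∀ z ∈ L2, z ∈ L := fun z hz => hsub z (List.mem_cons_of_mem _ hz)
    rcases ih hsub2 with hL2 | ⟨w, hw, h1, h2, h3⟩
    · obtain ⟨w, hw, hcw⟩ := hcond
      by_cases hex : ∃ w' ∈ L2, φ' y v0 ∈ fr G K φ' w'
      · exact Or.inl (MF.cons hL2 hnm hadj hex)
      · -- the color of the y-v0 edge must be γ, and some parent lost it
        have hcz : φ y v0 ≠ β := by
          intro h
          exact MF.fr_y_disj hno hPC hMFbig w (hsub2 w hw) β hβy (h ▸ hcw)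
        have hczγ : φ y v0 = γ := by
          by_contra h
          exact hex ⟨w, hw, by
            rw [hyedges]
            exact (hfr1 w _ hcz h).2 hcw⟩
        have hγ'w : γ ∉ fr G K φ' w := by
          intro h
          exact hex ⟨w, hw, by rw [hyedges, hczγ]; exact h⟩
        obtain ⟨L'', hMF'', -⟩ := hL2.suffix w hw
        exact Or.inr ⟨w, List.mem_cons_of_mem _ hw, hczγ ▸ hcw, hγ'w, L'', hMF''⟩
    · exact Or.inr ⟨w, List.mem_cons_of_mem _ hw, h1, h2, h3⟩

/-- Theorem (2): the free sets of distinct fan vertices are disjoint. -/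
lemma MF.fr_disj (hno : ∀ ψ, ¬ IsEdgeColoring G K ψ) {φ : V → V → ℕ} {y x : V} {L : List V}
    (hPC : PC G K φ y x) (hMF : MF G K φ y x L) (hKy : G.degree y ≤ K) :
    ∀ u ∈ L, ∀ v ∈ L, u ≠ v → ∀ γ, γ ∈ fr G K φ u → γ ∈ fr G K φ v → False := by
  intro u huL v hvL huv γ hγu hγv
  obtain ⟨hyx, hsym, h0, hcol, hprop⟩ := hPC
  have hPC' : PC G K φ y x := ⟨hyx, hsym, h0, hcol, hprop⟩
  -- a color free at y
  have hfry : (fr G K φ y).Nonempty := by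
    rw [← card_pos]
    have := fr_card_end (G := G) (K := K) hPC'
    omega
  obtain ⟨β, hβy⟩ := hfry
  have hβI : β ∈ Icc 1 K := fr_subset_Icc hβy
  have hγI : γ ∈ Icc 1 K := fr_subset_Icc hγu
  have hβ0 : β ≠ 0 := zero_not_mem_Icc hβI
  have hγ0 : γ ≠ 0 := zero_not_mem_Icc hγI
  have hβγ : β ≠ γ := by
    intro h
    exact MF.fr_y_disj hno hPC' hMF u huL β hβy (h ▸ hγu)
  set H := kgr G φ β γ with hH
  have hadjH : ∀ a b, H.Adj a b ↔ G.Adj a b ∧ (φ a b = β ∨ φ a b = γ) :=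
    fun a b => kgr_adj hsym
  -- at most one β-edge / γ-edge at each vertex
  have key : ∀ z z1 z2, G.Adj z z1 → G.Adj z z2 → φ z z1 = φ z z2 → φ z z1 ≠ 0 → z1 = z2 := by
    intro z z1 z2 ha1 ha2 he hne
    by_contra hne12
    exact hne (hprop z z1 z2 ha1 ha2 hne12 he)
  have h3 : ∀ z z1 z2 z3, H.Adj z z1 → H.Adj z z2 → H.Adj z z3 → z1 ≠ z2 → z1 ≠ z3 →
      z2 = z3 := by
    intro z z1 z2 z3 ha1 ha2 ha3 h12 h13
    obtain ⟨ga1, c1⟩ := (hadjH z z1).1 ha1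
    obtain ⟨ga2, c2⟩ := (hadjH z z2).1 ha2
    obtain ⟨ga3, c3⟩ := (hadjH z z3).1 ha3
    rcases c2 with c2 | c2 <;> rcases c3 with c3 | c3
    · exact key z z2 z3 ga2 ga3 (c2.trans c3.symm) (c2 ▸ hβ0)
    · rcases c1 with c1 | c1
      · exact absurd (key z z1 z2 ga1 ga2 (c1.trans c2.symm) (c1 ▸ hβ0)) h12
      · exact absurd (key z z1 z3 ga1 ga3 (c1.trans c3.symm) (c1 ▸ hγ0)) h13
    · rcases c1 with c1 | c1
      · exact absurd (key z z1 z3 ga1 ga3 (c1.trans c3.symm) (c1 ▸ hβ0)) h13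
      · exact absurd (key z z1 z2 ga1 ga2 (c1.trans c2.symm) (c1 ▸ hγ0)) h12
    · exact key z z2 z3 ga2 ga3 (c2.trans c3.symm) (c2 ▸ hγ0)
  -- degree ≤ 1 conditions at y, u, v
  have hdeg1 : ∀ z, γ ∉ fr G K φ z → β ∈ fr G K φ z ∨ True → True := fun _ _ _ => trivial
  have h1miss : ∀ z, (∀ t, G.Adj z t → φ z t ≠ γ) →
      ∀ z1 z2, H.Adj z z1 → H.Adj z z2 → z1 = z2 := by
    intro z hmiss z1 z2 ha1 ha2
    obtain ⟨ga1, c1⟩ := (hadjH z z1).1 ha1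
    obtain ⟨ga2, c2⟩ := (hadjH z z2).1 ha2
    have c1' : φ z z1 = β := by
      rcases c1 with c1 | c1
      · exact c1
      · exact absurd c1 (hmiss z1 ga1)
    have c2' : φ z z2 = β := by
      rcases c2 with c2 | c2
      · exact c2
      · exact absurd c2 (hmiss z2 ga2)
    exact key z z1 z2 ga1 ga2 (c1'.trans c2'.symm) (c1' ▸ hβ0)
  have h1missβ : ∀ z, (∀ t, G.Adj z t → φ z t ≠ β) →
      ∀ z1 z2, H.Adj z z1 → H.Adj z z2 → z1 = z2 := by
    intro z hmiss z1 z2 ha1 ha2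
    obtain ⟨ga1, c1⟩ := (hadjH z z1).1 ha1
    obtain ⟨ga2, c2⟩ := (hadjH z z2).1 ha2
    have c1' : φ z z1 = γ := by
      rcases c1 with c1 | c1
      · exact absurd c1 (hmiss z1 ga1)
      · exact c1
    have c2' : φ z z2 = γ := by
      rcases c2 with c2 | c2
      · exact absurd c2 (hmiss z2 ga2)
      · exact c2
    exact key z z1 z2 ga1 ga2 (c1'.trans c2'.symm) (c1' ▸ hγ0)
  have h1y : ∀ z1 z2, H.Adj y z1 → H.Adj y z2 → z1 = z2 :=
    h1missβ y (fun t ht => (fr_mem_iff.1 hβy).2 t ht)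
  have h1u : ∀ z1 z2, H.Adj u z1 → H.Adj u z2 → z1 = z2 :=
    h1miss u (fun t ht => (fr_mem_iff.1 hγu).2 t ht)
  have h1v : ∀ z1 z2, H.Adj v z1 → H.Adj v z2 → z1 = z2 :=
    h1miss v (fun t ht => (fr_mem_iff.1 hγv).2 t ht)
  have hyu : y ≠ u := G.ne_of_adj (hMF.adj hyx u huL)
  have hyv : y ≠ v := G.ne_of_adj (hMF.adj hyx v hvL)
  -- the core argument for a fan vertex not in the Kempe chain of y
  have core : ∀ l ∈ L, γ ∈ fr G K φ l → ¬ H.Reachable y l → False := by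
    intro l hlL hγl hnr
    obtain ⟨φ', hPCφ', hsw1, hswap, hfrswap, hfrc⟩ :=
      kempe hno hPC' hβI hγI hβγ l
    have hyedges : ∀ z, φ' y z = φ y z :=
      hsw1 y (fun h => hnr h.symm)
    have hfry' : fr G K φ' y = fr G K φ y := fr_congr hyedges
    have hβl' : β ∈ fr G K φ' l := hfrswap l (SimpleGraph.Reachable.refl l) hγl
    rcases MF.reconstruct hno hPC' hPCφ' hyedges hMF hβy
        (fun w cz h1 h2 => hfrc w cz h1 h2) L hMF (fun z hz => hz) with hMF' | hw
    · obtain ⟨ψ, hPCψ, hR2, hR5, hR3⟩ := hMF'.rot hPCφ' l hlL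
      have hβψy : β ∈ fr G K ψ y := by
        rw [fr_y_of_R3 hR3, hfry']
        exact hβy
      have hβψl : β ∈ fr G K ψ l := fr_mono_rot hPCψ hR2 hβl'
      exact PC.extend hno hPCψ hβψy hβψl
    · obtain ⟨w, hwL, hγw, hγ'w, L'', hMF''⟩ := hw
      -- w gained γ under the swap, so it lost its unique β-edge: β is free at w under φ'
      have hβ'w : β ∈ fr G K φ' w := by
        rw [fr_mem_iff] at hγ'w ⊢
        push_neg at hγ'w
        obtain ⟨z0, hz0, he0⟩ := hγ'w hγI
        have hz0β : φ w z0 = β := by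
          rcases hswap w z0 with h | ⟨h1', h2'⟩ | ⟨h1', h2'⟩
          · exact absurd (h ▸ he0) ((fr_mem_iff.1 hγw).2 z0 hz0)
          · exact h1'
          · exact absurd h1' ((fr_mem_iff.1 hγw).2 z0 hz0)
        refine ⟨hβI, fun z hz he => ?_⟩
        rcases hswap w z with h | ⟨h1', h2'⟩ | ⟨h1', h2'⟩
        · -- unchanged edge colored β under φ: must be the z0 edge, contradiction
          have hzβ : φ w z = β := h ▸ he
          have : z = z0 := key w z z0 hz hz0 (hzβ.trans hz0β.symm) (hzβ ▸ hβ0)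
          rw [this, he0] at he
          exact hβγ he.symm
        · rw [h2'] at he
          exact hβγ he.symm
        · exact (fr_mem_iff.1 hγw).2 z hz h1'
      obtain ⟨ψ, hPCψ, hR2, hR5, hR3⟩ := hMF''.rot hPCφ' w List.mem_cons_self
      have hβψy : β ∈ fr G K ψ y := by
        rw [fr_y_of_R3 hR3, hfry']
        exact hβy
      have hβψw : β ∈ fr G K ψ w := fr_mono_rot hPCψ hR2 hβ'w
      exact PC.extend hno hPCψ hβψy hβψw
  by_cases hru : H.Reachable y u
  · by_cases hrv : H.Reachable y v
    · exact VAux2.three_ends H (fun z z1 z2 z3 a1 a2 a3 => h3 z z1 z2 z3 a1 a2 a3)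
        y u v h1y h1u h1v hyu hyv huv hru hrv
    · exact core v hvL hγv hrv
  · exact core u huL hγu hru

lemma PC.symmPC {φ : V → V → ℕ} {a b : V} (h : PC G K φ a b) : PC G K φ b a := by
  obtain ⟨hab, hsym, h0, hcol, hprop⟩ := h
  refine ⟨hab.symm, hsym, by rw [hsym]; exact h0, ?_, hprop⟩
  intro u v huv hne
  exact hcol u v huv (fun h => hne (h.trans (Sym2.eq_swap)))

lemma exists_saturated {φ : V → V → ℕ} {y x : V} (hPC : PC G K φ y x) :
    ∃ L, MF G K φ y x L ∧
      ∀ v0, v0 ∉ L → G.Adj y v0 → ¬ ∃ w ∈ L, φ y v0 ∈ fr G K φ w := by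
  suffices h : ∀ n (L : List V), MF G K φ y x L → Fintype.card V ≤ L.length + n →
      ∃ L', MF G K φ y x L' ∧
        ∀ v0, v0 ∉ L' → G.Adj y v0 → ¬ ∃ w ∈ L', φ y v0 ∈ fr G K φ w by
    exact h (Fintype.card V) [x] MF.base (by simp)
  intro n
  induction n with
  | zero =>
    intro L hMF hlen
    by_cases hsat : ∃ v0, v0 ∉ L ∧ G.Adj y v0 ∧ ∃ w ∈ L, φ y v0 ∈ fr G K φ w
    · obtain ⟨v0, h1, h2, h3⟩ := hsat
      have hn := (MF.cons hMF h1 h2 h3).nodup.length_le_card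
      simp only [List.length_cons] at hn
      omega
    · push_neg at hsat
      exact ⟨L, hMF, fun v0 h1 h2 h3 => by
        obtain ⟨w', hw', hc'⟩ := h3
        exact hsat v0 h1 h2 w' hw' hc'⟩
  | succ n ih =>
    intro L hMF hlen
    by_cases hsat : ∃ v0, v0 ∉ L ∧ G.Adj y v0 ∧ ∃ w ∈ L, φ y v0 ∈ fr G K φ w
    · obtain ⟨v0, h1, h2, h3⟩ := hsat
      exact ih (v0 :: L) (MF.cons hMF h1 h2 h3) (by simp only [List.length_cons]; omega)
    · push_neg at hsat
      exact ⟨L, hMF, fun v0 h1 h2 h3 => by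
        obtain ⟨w', hw', hc'⟩ := h3
        exact hsat v0 h1 h2 w' hw' hc'⟩

/-- Vizing's Adjacency Lemma. -/
theorem VAL (hno : ∀ ψ, ¬ IsEdgeColoring G K ψ) {φ : V → V → ℕ} {y x : V}
    (hPC : PC G K φ y x) (hdegy : G.degree y ≤ K) (hdegall : ∀ v, G.degree v ≤ K) :
    K + 1 ≤ G.degree x + ((G.neighborFinset y).filter fun z => G.degree z = K).card := by
  obtain ⟨L, hMF, hsat⟩ := exists_saturated hPC
  have hyx : G.Adj y x := hPC.1
  set F := L.toFinset with hF
  have hxF : x ∈ F := List.mem_toFinset.2 hMF.x_mem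
  set T := F.erase x with hT
  -- the union of free sets
  have hdisj : ∀ u ∈ F, ∀ v ∈ F, u ≠ v → Disjoint (fr G K φ u) (fr G K φ v) := by
    intro u hu v hv huv
    rw [disjoint_left]
    intro c hcu hcv
    exact hMF.fr_disj hno hPC hdegy u (List.mem_toFinset.1 hu) v (List.mem_toFinset.1 hv)
      huv c hcu hcv
  have hcardU : (F.biUnion (fr G K φ)).card = ∑ z ∈ F, (fr G K φ z).card :=
    card_biUnion hdisj
  have hUsub : F.biUnion (fr G K φ) ⊆ T.image (fun z => φ y z) := by
    intro c hc
    obtain ⟨z, hzF, hcz⟩ := mem_biUnion.1 hc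
    have hzL : z ∈ L := List.mem_toFinset.1 hzF
    have hcI : c ∈ Icc 1 K := fr_subset_Icc hcz
    have hcy : c ∉ fr G K φ y := fun h => hMF.fr_y_disj hno hPC z hzL c h hcz
    rw [fr_mem_iff] at hcy
    push_neg at hcy
    obtain ⟨g, hg, hge⟩ := hcy hcI
    have hgL : g ∈ L := by
      by_contra hgL
      exact hsat g hgL hg ⟨z, hzL, hge ▸ hcz⟩
    have hgx : g ≠ x := by
      intro h
      rw [h, hPC.2.2.1] at hge
      exact zero_not_mem_Icc hcI hge.symm
    exact mem_image.2 ⟨g, mem_erase.2 ⟨hgx, List.mem_toFinset.2 hgL⟩, hge⟩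
  have hcardT : T.card + 1 = F.card := by
    rw [hT, card_erase_of_mem hxF]
    have : 1 ≤ F.card := card_pos.2 ⟨x, hxF⟩
    omega
  have hUT : (F.biUnion (fr G K φ)).card ≤ T.card :=
    le_trans (card_le_card hUsub) card_image_le
  -- split the sum
  have hsum : ∑ z ∈ F, (fr G K φ z).card = (fr G K φ x).card + ∑ z ∈ T, (fr G K φ z).card :=
    (Finset.add_sum_erase F _ hxF).symm
  set T0 := T.filter (fun z => ¬ G.degree z = K) with hT0
  set T1 := T.filter (fun z => G.degree z = K) with hT1
  have hT01 : T1.card + T0.card = T.card := card_filter_add_card_filter_not _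
  have hsumT0 : T0.card ≤ ∑ z ∈ T, (fr G K φ z).card := by
    calc T0.card = ∑ _z ∈ T0, 1 := by simp
    _ ≤ ∑ z ∈ T0, (fr G K φ z).card := by
        apply sum_le_sum
        intro z hz
        have h1 := fr_card (G := G) (K := K) φ z
        have h2 := hdegall z
        have h3 : ¬ G.degree z = K := (mem_filter.1 hz).2
        omega
    _ ≤ ∑ z ∈ T, (fr G K φ z).card := sum_le_sum_of_subset (filter_subset _ _)
  have hfrx : K + 1 ≤ (fr G K φ x).card + G.degree x := fr_card_end hPC.symmPC
  have hT1sub : T1 ⊆ (G.neighborFinset y).filter fun z => G.degree z = K := by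
    intro z hz
    rw [mem_filter] at hz ⊢
    refine ⟨?_, hz.2⟩
    rw [SimpleGraph.mem_neighborFinset]
    exact hMF.adj hyx z (List.mem_toFinset.1 (mem_erase.1 hz.1).2)
  have hT1card := card_le_card hT1sub
  omega

lemma PC.ofColoring {a b : V} (hab : G.Adj a b) {φ0 : V → V → ℕ}
    (h : IsEdgeColoring (G.deleteEdges {s(a,b)}) K φ0) :
    PC G K (fun u v => if s(u,v) = s(a,b) then 0 else φ0 u v) a b := by
  obtain ⟨hsym, hcol, hprop⟩ := h
  have hmem : ∀ u v : V, s(u,v) ∉ ({s(a,b)} : Set (Sym2 V)) ↔ ¬ s(u,v) = s(a,b) := by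
    intro u v; simp
  refine ⟨hab, ?_, ?_, ?_, ?_⟩
  · intro u v
    dsimp only
    by_cases hh : s(u,v) = s(a,b)
    · rw [if_pos hh, if_pos (by rwa [Sym2.eq_swap])]
    · rw [if_neg hh, if_neg (fun hc => hh ((Sym2.eq_swap (a := u)).trans hc)), hsym]
  · dsimp only; rw [if_pos rfl]
  · intro u v huv hne
    dsimp only
    rw [if_neg hne]
    exact hcol (by rw [SimpleGraph.deleteEdges_adj]; exact ⟨huv, (hmem u v).2 hne⟩)
  · intro v u w hvu hvw huw heq
    dsimp only at heq ⊢
    by_cases h1 : s(v,u) = s(a,b)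
    · rw [if_pos h1]
    · rw [if_neg h1] at heq ⊢
      by_cases h2 : s(v,w) = s(a,b)
      · rw [if_pos h2] at heq; exact heq
      · rw [if_neg h2] at heq
        have a1 : (G.deleteEdges {s(a,b)}).Adj v u := by
          rw [SimpleGraph.deleteEdges_adj]; exact ⟨hvu, (hmem v u).2 h1⟩
        have a2 : (G.deleteEdges {s(a,b)}).Adj v w := by
          rw [SimpleGraph.deleteEdges_adj]; exact ⟨hvw, (hmem v w).2 h2⟩
        exact absurd heq (hprop a1 a2 huw)

end
end VAux


variable [Fintype V]

set_option maxHeartbeats 1000000 in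
/-- Discharging setup as in the paper. Let `ℓ` be a nonnegative integer, let `x ∈ X⁻` with
`k = d(x)`, let `y ∈ N(x)`, and assume `ℓ ≤ k - 2`. If `σ_q(x,y) ≥ Δ - k + 1 + ℓ`, then in
Step 2 the vertex `y` gives `x` charge at least
`h(k,ℓ) = (ωΔ - ℓ(d+2)ω/(d+2-ω))/(k-ℓ-1)`. -/
theorem statement16 (G : SimpleGraph V) [DecidableRel G.Adj]
    (d : ℕ) (hd : d = 3 ∨ d = 4 ∨ 19 ≤ d)
    (hG : IsDeltaCritical G) (hmin : ∀ v : V, d ≤ G.degree v)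
    (hmax : (d + 2) ^ (5 * d + 10) ≤ G.maxDegree)
    (X : Finset V) (hXind : ∀ u ∈ X, ∀ v ∈ X, u ≠ v → ¬ G.Adj u v)
    (hXmax : ∀ s : Finset V, (∀ u ∈ s, ∀ v ∈ s, u ≠ v → ¬ G.Adj u v) → s.card ≤ X.card)
    (ω : ℝ) (hω : ((d = 3 ∨ d = 4) ∧ ω = 2) ∨
      (19 ≤ d ∧ ω = (((d : ℝ) - 1) * d) ^ ((1 : ℝ) / 3)))
    (q : ℝ) (hq : q = (((d : ℝ) + 2 - ω) / ((d : ℝ) + 2)) * G.maxDegree)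
    (x y : V) (hx : x ∈ Xm G d q X) (hadj : G.Adj x y)
    (ℓ : ℕ) (hℓ : (ℓ : ℝ) ≤ (G.degree x : ℝ) - 2)
    (hσ : (G.maxDegree : ℝ) - G.degree x + 1 + ℓ ≤ (sigmaq G q x y : ℝ)) :
    (ω * G.maxDegree - ℓ * (((d : ℝ) + 2) * ω / ((d : ℝ) + 2 - ω))) /
        ((G.degree x : ℝ) - ℓ - 1) ≤ step2 G d ω q X y := by
  classical
  -- notation
  have hchrom := hG.2.1
  set K := G.maxDegree with hK
  set kx := G.degree x with hkx
  -- basic facts about ω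
  obtain ⟨hω0, hωd⟩ : 0 < ω ∧ ω ≤ (d : ℝ) := by
    rcases hω with ⟨hd34, rfl⟩ | ⟨hd19, rfl⟩
    · refine ⟨by norm_num, ?_⟩
      rcases hd34 with rfl | rfl <;> norm_num
    · have hdR : (19 : ℝ) ≤ (d : ℝ) := by exact_mod_cast hd19
      have hbase : (0 : ℝ) < ((d : ℝ) - 1) * d := by nlinarith
      refine ⟨Real.rpow_pos_of_pos hbase _, ?_⟩
      have h1 : ((d : ℝ) - 1) * d ≤ (d : ℝ) ^ (3 : ℕ) := by nlinarith
      calc (((d : ℝ) - 1) * d) ^ ((1 : ℝ) / 3)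
          ≤ ((d : ℝ) ^ (3 : ℕ)) ^ ((1 : ℝ) / 3) :=
            Real.rpow_le_rpow (le_of_lt hbase) h1 (by norm_num)
        _ = (d : ℝ) := by
            rw [← Real.rpow_natCast (d : ℝ) 3, ← Real.rpow_mul (by positivity)]
            norm_num
  have hd2 : (0 : ℝ) < (d : ℝ) + 2 := by positivity
  have hd2ω : (0 : ℝ) < (d : ℝ) + 2 - ω := by linarith
  have hK1 : 1 ≤ K := le_trans (Nat.one_le_pow _ _ (by omega)) hmax
  have hKR : (1 : ℝ) ≤ (K : ℝ) := by exact_mod_cast hK1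
  have hq0 : 0 < q := by
    rw [hq]
    exact mul_pos (div_pos hd2ω hd2) (by linarith)
  have hqK : q < (K : ℝ) := by
    rw [hq]
    have h1 : ((d : ℝ) + 2 - ω) / ((d : ℝ) + 2) < 1 := by
      rw [div_lt_one hd2]; linarith
    calc ((d : ℝ) + 2 - ω) / ((d : ℝ) + 2) * K < 1 * K :=
          mul_lt_mul_of_pos_right h1 (by linarith)
      _ = (K : ℝ) := one_mul _
  -- facts about x
  have hxXm := hx
  rw [Xm, mem_filter] at hxXm
  obtain ⟨hxX, hdk, hkq⟩ := hxXm
  have hk2 : (2 : ℝ) ≤ (kx : ℝ) := by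
    have : (0 : ℝ) ≤ (ℓ : ℝ) := Nat.cast_nonneg ℓ
    linarith
  -- sets
  have hyx : G.Adj y x := hadj.symm
  set Nf := G.neighborFinset y with hNf
  have hxNf : x ∈ Nf := by
    rw [hNf, SimpleGraph.mem_neighborFinset]
    exact hyx
  set XmS := Nf ∩ Xm G d q X with hXmS
  set XpS := Nf ∩ Xp G q X with hXpS
  have hxXmS : x ∈ XmS := mem_inter.2 ⟨hxNf, hx⟩
  have hdy : Nf.card ≤ K := by
    rw [hNf]
    exact le_trans (le_of_eq (G.card_neighborFinset_eq_degree y)) (G.degree_le_maxDegree y)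
  -- Vizing's adjacency lemma
  set Dfin := Nf.filter (fun z => G.degree z = K) with hDf
  have hVAL : K + 1 ≤ kx + Dfin.card := by
    -- no K-edge-coloring of G
    have hno : ∀ ψ, ¬ IsEdgeColoring G K ψ := by
      intro ψ hψ
      have h1 : chromIndex G ≤ K := Nat.sInf_le ⟨ψ, hψ⟩
      rw [hchrom] at h1
      omega
    -- a (K+1)-coloring of G exists
    have hSG : {k | ∃ φ : V → V → ℕ, IsEdgeColoring G k φ}.Nonempty := by
      by_contra h
      rw [Set.not_nonempty_iff_eq_empty] at h
      have h2 := hchrom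
      rw [chromIndex, h, Nat.sInf_empty] at h2
      omega
    have hmem := Nat.sInf_mem hSG
    rw [show sInf {k | ∃ φ : V → V → ℕ, IsEdgeColoring G k φ} = chromIndex G from rfl,
      hchrom] at hmem
    obtain ⟨φbig, hφbig⟩ := hmem
    -- a K-coloring of G - xy exists
    have hedge : s(x, y) ∈ G.edgeSet := G.mem_edgeSet.2 hadj
    have hcrit := hG.2.2 _ hedge
    have hSG' : {k | ∃ φ : V → V → ℕ,
        IsEdgeColoring (G.deleteEdges {s(x, y)}) k φ}.Nonempty := by
      refine ⟨K + 1, φbig, hφbig.1, ?_, ?_⟩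
      · intro u v huv
        exact hφbig.2.1 ((SimpleGraph.deleteEdges_adj.1 huv).1)
      · intro v a b h1 h2 hne
        exact hφbig.2.2 (SimpleGraph.deleteEdges_adj.1 h1).1
          (SimpleGraph.deleteEdges_adj.1 h2).1 hne
    have hmem' := Nat.sInf_mem hSG'
    rw [show sInf {k | ∃ φ : V → V → ℕ, IsEdgeColoring (G.deleteEdges {s(x, y)}) k φ} =
      chromIndex (G.deleteEdges {s(x, y)}) from rfl, hcrit] at hmem'
    obtain ⟨φ0, hφ0⟩ := hmem'
    have hsetseq : ({s(y, x)} : Set (Sym2 V)) = {s(x, y)} := by rw [Sym2.eq_swap]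
    have hφ0' : IsEdgeColoring (G.deleteEdges {s(y, x)}) K φ0 := by rwa [hsetseq]
    have hPC := VAux.PC.ofColoring (G := G) (K := K) hyx hφ0'
    have hdegy : G.degree y ≤ K := G.degree_le_maxDegree y
    have := VAux.VAL (G := G) (K := K) hno hPC hdegy (fun v => G.degree_le_maxDegree v)
    exact this
  -- the σ_q counting: |XmS| ≤ kx - 1 - ℓ
  set A := Nf.filter (fun u => u ≠ x ∧ q ≤ (G.degree u : ℝ)) with hA
  have hAcard : sigmaq G q x y = A.card := by
    rw [sigmaq, hA, hNf]
  have hmub : (XmS.card : ℝ) ≤ (kx : ℝ) - 1 - ℓ := by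
    have hdisj1 : Disjoint A (XmS.erase x) := by
      rw [disjoint_left]
      intro u hu1 hu2
      have h1 : q ≤ (G.degree u : ℝ) := (mem_filter.1 hu1).2.2
      have h2 : (G.degree u : ℝ) < q :=
        (mem_filter.1 (mem_inter.1 (mem_erase.1 hu2).2).2).2.2
      linarith
    have hsubA : A ∪ XmS.erase x ⊆ Nf.erase x := by
      intro u hu
      rcases mem_union.1 hu with hu | hu
      · exact mem_erase.2 ⟨(mem_filter.1 hu).2.1, (mem_filter.1 hu).1⟩
      · exact mem_erase.2 ⟨(mem_erase.1 hu).1, mem_of_mem_inter_left (mem_erase.1 hu).2⟩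
    have h1 : A.card + (XmS.erase x).card ≤ (Nf.erase x).card := by
      rw [← card_union_of_disjoint hdisj1]
      exact card_le_card hsubA
    have h2 : (Nf.erase x).card + 1 = Nf.card := by
      rw [card_erase_of_mem hxNf]
      have : 1 ≤ Nf.card := card_pos.2 ⟨x, hxNf⟩
      omega
    have h3 : (XmS.erase x).card + 1 = XmS.card := by
      rw [card_erase_of_mem hxXmS]
      have : 1 ≤ XmS.card := card_pos.2 ⟨x, hxXmS⟩
      omega
    have h4 : A.card + XmS.card ≤ K := by omega
    have h5 : (A.card : ℝ) + XmS.card ≤ (K : ℝ) := by exact_mod_cast h4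
    rw [hAcard] at hσ
    push_cast at hσ h5 ⊢
    linarith
  -- VAL counting: |XpS| + |XmS| ≤ kx - 1
  have hpm : XpS.card + XmS.card + 1 ≤ kx := by
    have hdisj2 : Disjoint XpS XmS := by
      rw [disjoint_left]
      intro u hu1 hu2
      have h1 : q ≤ (G.degree u : ℝ) := (mem_filter.1 (mem_inter.1 hu1).2).2.1
      have h2 : (G.degree u : ℝ) < q := (mem_filter.1 (mem_inter.1 hu2).2).2.2
      linarith
    have hdisj3 : Disjoint (XpS ∪ XmS) Dfin := by
      rw [disjoint_left]
      intro u hu1 hu2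
      have hdK : G.degree u = K := (mem_filter.1 hu2).2
      rcases mem_union.1 hu1 with hu | hu
      · exact absurd hdK (Nat.ne_of_lt (mem_filter.1 (mem_inter.1 hu).2).2.2)
      · have h2 : (G.degree u : ℝ) < q := (mem_filter.1 (mem_inter.1 hu).2).2.2
        rw [hdK] at h2
        linarith
    have hsub3 : XpS ∪ XmS ∪ Dfin ⊆ Nf := by
      intro u hu
      rcases mem_union.1 hu with hu | hu
      · rcases mem_union.1 hu with hu | hu
        · exact mem_of_mem_inter_left hu
        · exact mem_of_mem_inter_left hu
      · exact filter_subset _ _ hu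
    have h1 : XpS.card + XmS.card + Dfin.card ≤ Nf.card := by
      rw [← card_union_of_disjoint hdisj2, ← card_union_of_disjoint hdisj3]
      exact card_le_card hsub3
    omega
  -- charge bound
  set cc := ((d : ℝ) + 2) * ω / ((d : ℝ) + 2 - ω) with hcc
  have hcc0 : 0 < cc := div_pos (mul_pos hd2 hω0) hd2ω
  have hccq : cc * q = ω * K := by
    rw [hcc, hq]
    field_simp
  have hKq : ((d : ℝ) + 2) * ((K : ℝ) - q) = ω * K := by
    rw [hq]
    field_simp
    ring
  have hg1le : ∀ u ∈ XpS, g1 d (K : ℝ) (G.degree u : ℝ) ≤ cc := by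
    intro u hu
    have hqu : q ≤ (G.degree u : ℝ) := (mem_filter.1 (mem_inter.1 hu).2).2.1
    have huK : (G.degree u : ℝ) ≤ (K : ℝ) := by
      exact_mod_cast G.degree_le_maxDegree u
    have hu0 : (0 : ℝ) < (G.degree u : ℝ) := lt_of_lt_of_le hq0 hqu
    rw [g1, div_le_iff₀ hu0]
    nlinarith [mul_le_mul_of_nonneg_left hqu (le_of_lt hcc0)]
  have hg1nonneg : ∀ u ∈ XpS, 0 ≤ g1 d (K : ℝ) (G.degree u : ℝ) := by
    intro u hu
    have hqu : q ≤ (G.degree u : ℝ) := (mem_filter.1 (mem_inter.1 hu).2).2.1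
    have huK : (G.degree u : ℝ) ≤ (K : ℝ) := by
      exact_mod_cast G.degree_le_maxDegree u
    have hu0 : (0 : ℝ) < (G.degree u : ℝ) := lt_of_lt_of_le hq0 hqu
    rw [g1]
    exact div_nonneg (mul_nonneg (by linarith) (by linarith)) (le_of_lt hu0)
  have hsumle : ∑ u ∈ XpS, g1 d (K : ℝ) (G.degree u : ℝ) ≤ XpS.card * cc := by
    calc ∑ u ∈ XpS, g1 d (K : ℝ) (G.degree u : ℝ) ≤ XpS.card • cc :=
          Finset.sum_le_card_nsmul _ _ _ hg1le
      _ = XpS.card * cc := nsmul_eq_mul _ _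
  have hM1form : M1star G d ω q X y =
      ω * K - ∑ u ∈ XpS, g1 d (K : ℝ) (G.degree u : ℝ) := rfl
  have hM1 : ω * K - XpS.card * cc ≤ M1star G d ω q X y := by
    rw [hM1form]
    linarith
  -- real versions of the cardinality bounds
  have hm1 : (1 : ℝ) ≤ (XmS.card : ℝ) := by
    exact_mod_cast card_pos.2 ⟨x, hxXmS⟩
  have hpR : (XpS.card : ℝ) ≤ (kx : ℝ) - 1 - XmS.card := by
    have : (XpS.card : ℝ) + XmS.card + 1 ≤ (kx : ℝ) := by exact_mod_cast hpm
    linarith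
  -- M1star is positive
  have hM1pos : 0 < M1star G d ω q X y := by
    by_contra hM
    push_neg at hM
    have h1 : ω * (K : ℝ) ≤ XpS.card * cc := by
      rw [hM1form] at hM
      linarith
    have hpq : (XpS.card : ℝ) < q := by linarith
    nlinarith [mul_lt_mul_of_pos_right hpq hcc0]
  -- conclusion
  have hne : (Nf ∩ Xm G d q X).Nonempty := ⟨x, hxXmS⟩
  rw [step2, if_pos ⟨hM1pos, hne⟩]
  have hden : (0 : ℝ) < (kx : ℝ) - ℓ - 1 := by linarith
  have hmpos : (0 : ℝ) < (XmS.card : ℝ) := by linarith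
  rw [div_le_div_iff₀ hden hmpos]
  have hMlb : ω * K - ((kx : ℝ) - 1 - XmS.card) * cc ≤ M1star G d ω q X y := by
    have := mul_le_mul_of_nonneg_right hpR (le_of_lt hcc0)
    linarith
  have hωKc : cc * ((kx : ℝ) - 1) ≤ ω * K := by
    have h1 : (kx : ℝ) - 1 ≤ q := by linarith
    have := mul_le_mul_of_nonneg_left h1 (le_of_lt hcc0)
    linarith
  have key : (ω * K - ℓ * cc) * XmS.card ≤
      (ω * K - ((kx : ℝ) - 1 - XmS.card) * cc) * ((kx : ℝ) - ℓ - 1) := by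
    nlinarith [mul_nonneg (sub_nonneg.2 (by linarith : (XmS.card : ℝ) ≤ (kx : ℝ) - ℓ - 1))
      (sub_nonneg.2 hωKc)]
  calc (ω * K - ℓ * cc) * XmS.card
      ≤ (ω * K - ((kx : ℝ) - 1 - XmS.card) * cc) * ((kx : ℝ) - ℓ - 1) := key
    _ ≤ M1star G d ω q X y * ((kx : ℝ) - ℓ - 1) :=
        mul_le_mul_of_nonneg_right hMlb (le_of_lt hden)
end
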